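/- arXiv:1408.1000 — 5 statements merged into one kernel-verified Lean document; each statement's English description precedes it below -/
import Mathlib

section
/- Let p be a probability distribution over an alphabet of k elements. Then: (i) for every α ≥ 0, P_{2α}(p) ≤ P_α(p)²; (ii) for every α > 1 and 0 ≤ β ≤ α, P_{α+β}(p) ≤ k^{(α−1)(α−β)/α} · P_α(p)²; and (iii) for every α > 1 and 0 ≤ β ≤ α, P_{α−β}(p) ≤ k^β · P_α(p). -/
open Real

/-- The power sum of order `α` of a distribution `p` on a finite alphabet. -/
noncomputable def powerSum {X : Type*} [Fintype X] (α : ℝ) (p : X → ℝ) : ℝ :=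
  ∑ x, p x ^ α

/-- `p` is a probability distribution on a finite alphabet. -/
def IsDist {X : Type*} [Fintype X] (p : X → ℝ) : Prop :=
  (∀ x, 0 ≤ p x) ∧ ∑ x, p x = 1

open Real Finset

/-- Superadditivity: sum of t-th powers is at most t-th power of the sum, t ≥ 1. -/
lemma sum_rpow_le_rpow_sum' {X : Type*} [Fintype X] {f : X → ℝ} (hf : ∀ x, 0 ≤ f x)
    {t : ℝ} (ht : 1 ≤ t) : ∑ x, f x ^ t ≤ (∑ x, f x) ^ t := by
  have ht0 : 0 < t := lt_of_lt_of_le one_pos ht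
  set S := ∑ x, f x with hSdef
  have hS0 : 0 ≤ S := Finset.sum_nonneg fun x _ => hf x
  rcases eq_or_lt_of_le hS0 with h | h
  · have hzero : ∀ x ∈ Finset.univ, f x = 0 := fun x hx =>
      le_antisymm (by
        have := Finset.single_le_sum (fun y _ => hf y) hx
        linarith [this]) (hf x)
    have : ∑ x, f x ^ t = 0 := by
      apply Finset.sum_eq_zero
      intro x hx
      rw [hzero x hx, Real.zero_rpow (ne_of_gt ht0)]
    rw [this, ← h, Real.zero_rpow (ne_of_gt ht0)]
  · have key : ∀ x, f x ^ t ≤ f x * S ^ (t - 1) := by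
      intro x
      rcases eq_or_lt_of_le (hf x) with h0 | h0
      · rw [← h0, Real.zero_rpow (ne_of_gt ht0), zero_mul]
      · have h1 : f x ^ t = f x * f x ^ (t - 1) := by
          rw [← Real.rpow_one_add' (hf x) (by intro hc; linarith)]
          ring_nf
        rw [h1]
        apply mul_le_mul_of_nonneg_left _ (hf x)
        apply Real.rpow_le_rpow (hf x) _ (by linarith)
        exact Finset.single_le_sum (fun y _ => hf y) (Finset.mem_univ x)
    calc ∑ x, f x ^ t ≤ ∑ x, f x * S ^ (t - 1) := Finset.sum_le_sum fun x _ => key x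
      _ = S * S ^ (t - 1) := by rw [← Finset.sum_mul]
      _ = S ^ t := by rw [← Real.rpow_one_add' hS0 (by intro hc; linarith)]; ring_nf

/-- Power-mean: for 0 ≤ r ≤ 1, ∑ f^r ≤ card^(1-r) * (∑ f)^r. -/
lemma sum_rpow_le_card_rpow_mul {X : Type*} [Fintype X] (hX : 0 < Fintype.card X)
    {f : X → ℝ} (hf : ∀ x, 0 ≤ f x) {r : ℝ} (hr0 : 0 ≤ r) (hr1 : r ≤ 1) :
    ∑ x, f x ^ r ≤ (Fintype.card X : ℝ) ^ (1 - r) * (∑ x, f x) ^ r := by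
  have hk0 : (0:ℝ) < Fintype.card X := by exact_mod_cast hX
  rcases eq_or_lt_of_le hr0 with h0 | h0
  · simp [← h0, Real.rpow_zero, Finset.card_univ]
  · have hS0 : 0 ≤ ∑ x, f x := Finset.sum_nonneg fun x _ => hf x
    have hw : ∑ _x : X, (Fintype.card X : ℝ)⁻¹ = 1 := by
      simp [Finset.sum_const, Finset.card_univ]
      field_simp
    have hmean := Real.arith_mean_le_rpow_mean Finset.univ
      (fun _ => (Fintype.card X : ℝ)⁻¹) (fun x => f x ^ r)
      (fun _ _ => by positivity) hw (fun x _ => Real.rpow_nonneg (hf x) r)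
      (p := 1/r) ((one_le_div h0).mpr hr1)
    have hz : ∀ x : X, (f x ^ r) ^ (1/r : ℝ) = f x := by
      intro x
      rw [← Real.rpow_mul (hf x), mul_one_div_cancel (ne_of_gt h0), Real.rpow_one]
    simp only [hz] at hmean
    rw [one_div_one_div] at hmean
    rw [← Finset.mul_sum, ← Finset.mul_sum] at hmean
    have : (Fintype.card X : ℝ)⁻¹ * ∑ x, f x ^ r ≤
        ((Fintype.card X : ℝ)⁻¹) ^ r * (∑ x, f x) ^ r := by
      calc (Fintype.card X : ℝ)⁻¹ * ∑ x, f x ^ r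
          ≤ ((Fintype.card X : ℝ)⁻¹ * ∑ x, f x) ^ r := hmean
        _ = ((Fintype.card X : ℝ)⁻¹) ^ r * (∑ x, f x) ^ r :=
            Real.mul_rpow (by positivity) hS0
    have hfinal := mul_le_mul_of_nonneg_left this (le_of_lt hk0)
    calc ∑ x, f x ^ r = (Fintype.card X : ℝ) * ((Fintype.card X : ℝ)⁻¹ * ∑ x, f x ^ r) := by
          field_simp
      _ ≤ (Fintype.card X : ℝ) * (((Fintype.card X : ℝ)⁻¹) ^ r * (∑ x, f x) ^ r) := hfinal
      _ = (Fintype.card X : ℝ) ^ (1 - r) * (∑ x, f x) ^ r := by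
          rw [Real.inv_rpow (le_of_lt hk0), Real.rpow_sub hk0, Real.rpow_one]
          ring
/-- Lower bound: for α ≥ 1, powerSum α p ≥ card^(1-α). -/
lemma card_rpow_le_powerSum {X : Type*} [Fintype X] (hX : 0 < Fintype.card X)
    {p : X → ℝ} (hp : IsDist p) {α : ℝ} (hα : 1 ≤ α) :
    (Fintype.card X : ℝ) ^ (1 - α) ≤ powerSum α p := by
  have hk0 : (0:ℝ) < Fintype.card X := by exact_mod_cast hX
  have hα0 : 0 < α := lt_of_lt_of_le one_pos hα
  have hP0 : 0 ≤ powerSum α p := Finset.sum_nonneg fun x _ => Real.rpow_nonneg (hp.1 x) α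
  have key := sum_rpow_le_card_rpow_mul hX (f := fun x => p x ^ α)
    (fun x => Real.rpow_nonneg (hp.1 x) α) (r := 1/α) (by positivity)
    ((div_le_one hα0).mpr hα)
  have hz : ∀ x : X, (p x ^ α) ^ (1/α : ℝ) = p x := by
    intro x
    rw [← Real.rpow_mul (hp.1 x), mul_one_div_cancel (ne_of_gt hα0), Real.rpow_one]
  simp only [hz] at key
  rw [hp.2] at key
  -- key : 1 ≤ card ^ (1 - 1/α) * (powerSum α p) ^ (1/α)
  have h1 : (1:ℝ) ≤ ((Fintype.card X : ℝ) ^ (1 - 1/α) * (powerSum α p) ^ (1/α)) ^ α := by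
    calc (1:ℝ) = 1 ^ α := (Real.one_rpow α).symm
      _ ≤ _ := Real.rpow_le_rpow one_pos.le key hα0.le
  rw [Real.mul_rpow (by positivity) (Real.rpow_nonneg hP0 _)] at h1
  rw [← Real.rpow_mul hk0.le, ← Real.rpow_mul hP0,
    one_div_mul_cancel (ne_of_gt hα0), Real.rpow_one] at h1
  have he : (1 - 1/α) * α = α - 1 := by field_simp
  rw [he] at h1
  have hc : (0:ℝ) < (Fintype.card X : ℝ) ^ (α - 1) := Real.rpow_pos_of_pos hk0 _
  have hinv : (Fintype.card X : ℝ) ^ (1 - α) = ((Fintype.card X : ℝ) ^ (α - 1))⁻¹ := by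
    rw [← Real.rpow_neg hk0.le]; ring_nf
  rw [hinv]
  calc ((Fintype.card X : ℝ) ^ (α - 1))⁻¹
      = ((Fintype.card X : ℝ) ^ (α - 1))⁻¹ * 1 := (mul_one _).symm
    _ ≤ ((Fintype.card X : ℝ) ^ (α - 1))⁻¹ *
        ((Fintype.card X : ℝ) ^ (α - 1) * powerSum α p) :=
        mul_le_mul_of_nonneg_left h1 (by positivity)
    _ = powerSum α p := by field_simp

theorem powerSum_moment_bounds {X : Type*} [Fintype X] {k : ℕ} (hk : Fintype.card X = k)
    (p : X → ℝ) (hp : IsDist p) :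
    (∀ α : ℝ, 0 ≤ α → powerSum (2 * α) p ≤ (powerSum α p) ^ 2) ∧
    (∀ α β : ℝ, 1 < α → 0 ≤ β → β ≤ α →
      powerSum (α + β) p ≤ (k : ℝ) ^ ((α - 1) * (α - β) / α) * (powerSum α p) ^ 2) ∧
    (∀ α β : ℝ, 1 < α → 0 ≤ β → β ≤ α →
      powerSum (α - β) p ≤ (k : ℝ) ^ β * powerSum α p) := by
  subst hk
  have hne : Nonempty X := by
    by_contra h
    rw [not_nonempty_iff] at h
    have h2 := hp.2
    rw [Finset.univ_eq_empty, Finset.sum_empty] at h2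
    exact zero_ne_one h2
  have hXpos : 0 < Fintype.card X := Fintype.card_pos_iff.mpr hne
  have hk0 : (0:ℝ) < Fintype.card X := by exact_mod_cast hXpos
  have hfnn : ∀ (α : ℝ) (x : X), 0 ≤ p x ^ α := fun α x => Real.rpow_nonneg (hp.1 x) α
  refine ⟨?_, ?_, ?_⟩
  · intro α hα
    have h1 : powerSum (2 * α) p = ∑ x, (p x ^ α) ^ (2:ℝ) := by
      simp only [powerSum]
      refine Finset.sum_congr rfl fun x _ => ?_
      rw [← Real.rpow_mul (hp.1 x)]
      ring_nf
    rw [h1]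
    calc ∑ x, (p x ^ α) ^ (2:ℝ) ≤ (∑ x, p x ^ α) ^ (2:ℝ) :=
          sum_rpow_le_rpow_sum' (hfnn α) one_le_two
      _ = (powerSum α p) ^ 2 := by
          rw [show ((2:ℝ) = ((2:ℕ):ℝ)) by norm_num, Real.rpow_natCast]; rfl
  · intro α β hα hβ0 hβα
    have hα0 : 0 < α := lt_trans one_pos hα
    set S := powerSum α p with hSdef
    have hSlb := card_rpow_le_powerSum hXpos hp (le_of_lt hα)
    have hSpos : 0 < S := lt_of_lt_of_le (Real.rpow_pos_of_pos hk0 _) hSlb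
    have h1 : powerSum (α + β) p = ∑ x, (p x ^ α) ^ ((α + β)/α) := by
      simp only [powerSum]
      refine Finset.sum_congr rfl fun x _ => ?_
      rw [← Real.rpow_mul (hp.1 x)]
      congr 1
      field_simp
    have h2 : ∑ x, (p x ^ α) ^ ((α + β)/α) ≤ S ^ ((α + β)/α) :=
      sum_rpow_le_rpow_sum' (hfnn α) ((le_div_iff₀ hα0).mpr (by linarith))
    have h3 : S ^ ((α + β)/α) = S ^ 2 * S ^ ((β - α)/α) := by
      rw [← Real.rpow_natCast S 2, ← Real.rpow_add hSpos]
      congr 1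
      push_cast
      field_simp
      ring
    have h4 : S ^ ((β - α)/α) ≤ ((Fintype.card X : ℝ) ^ (1 - α)) ^ ((β - α)/α) :=
      Real.rpow_le_rpow_of_nonpos (Real.rpow_pos_of_pos hk0 _) hSlb
        (div_nonpos_of_nonpos_of_nonneg (by linarith) hα0.le)
    have h5 : ((Fintype.card X : ℝ) ^ (1 - α)) ^ ((β - α)/α)
        = (Fintype.card X : ℝ) ^ ((α - 1) * (α - β) / α) := by
      rw [← Real.rpow_mul hk0.le]
      congr 1
      field_simp
      ring
    calc powerSum (α + β) p ≤ S ^ ((α + β)/α) := by rw [h1]; exact h2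
      _ = S ^ 2 * S ^ ((β - α)/α) := h3
      _ ≤ S ^ 2 * ((Fintype.card X : ℝ) ^ ((α - 1) * (α - β) / α)) := by
          rw [← h5]
          exact mul_le_mul_of_nonneg_left h4 (by positivity)
      _ = (Fintype.card X : ℝ) ^ ((α - 1) * (α - β) / α) * S ^ 2 := mul_comm _ _
  · intro α β hα hβ0 hβα
    have hα0 : 0 < α := lt_trans one_pos hα
    set S := powerSum α p with hSdef
    have hSlb := card_rpow_le_powerSum hXpos hp (le_of_lt hα)
    have hSpos : 0 < S := lt_of_lt_of_le (Real.rpow_pos_of_pos hk0 _) hSlb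
    set r : ℝ := (α - β)/α with hrdef
    have hr0 : 0 ≤ r := div_nonneg (by linarith) hα0.le
    have hr1 : r ≤ 1 := (div_le_one hα0).mpr (by linarith)
    have h1 : powerSum (α - β) p = ∑ x, (p x ^ α) ^ r := by
      simp only [powerSum]
      refine Finset.sum_congr rfl fun x _ => ?_
      rw [← Real.rpow_mul (hp.1 x)]
      congr 1
      rw [hrdef]
      field_simp
    have h2 : ∑ x, (p x ^ α) ^ r ≤ (Fintype.card X : ℝ) ^ (1 - r) * S ^ r :=
      sum_rpow_le_card_rpow_mul hXpos (hfnn α) hr0 hr1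
    have h3 : S ^ r = S * S ^ (r - 1) := by
      nth_rewrite 1 [show r = 1 + (r - 1) by ring]
      rw [Real.rpow_add hSpos, Real.rpow_one]
    have h4 : S ^ (r - 1) ≤ (Fintype.card X : ℝ) ^ ((1 - α) * (r - 1)) := by
      calc S ^ (r - 1) ≤ ((Fintype.card X : ℝ) ^ (1 - α)) ^ (r - 1) :=
            Real.rpow_le_rpow_of_nonpos (Real.rpow_pos_of_pos hk0 _) hSlb (by linarith)
        _ = (Fintype.card X : ℝ) ^ ((1 - α) * (r - 1)) := by
            rw [← Real.rpow_mul hk0.le]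
    have h5 : (Fintype.card X : ℝ) ^ (1 - r) * (Fintype.card X : ℝ) ^ ((1 - α) * (r - 1))
        = (Fintype.card X : ℝ) ^ β := by
      rw [← Real.rpow_add hk0]
      congr 1
      rw [hrdef]
      field_simp
      ring
    calc powerSum (α - β) p ≤ (Fintype.card X : ℝ) ^ (1 - r) * S ^ r := by
          rw [h1]; exact h2
      _ = (Fintype.card X : ℝ) ^ (1 - r) * (S * S ^ (r - 1)) := by rw [h3]
      _ ≤ (Fintype.card X : ℝ) ^ (1 - r) *
          (S * (Fintype.card X : ℝ) ^ ((1 - α) * (r - 1))) := by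
          apply mul_le_mul_of_nonneg_left _ (by positivity)
          exact mul_le_mul_of_nonneg_left h4 hSpos.le
      _ = (Fintype.card X : ℝ) ^ β * S := by rw [← h5]; ring
end

section
/- Let X be a Poisson random variable with parameter λ > 0. Then for every positive integer r, the variance of the falling power satisfies Var[X^{\underline{r}}] ≤ λ^r ((λ + r)^r − λ^r). -/
open Real

/-- The probability mass function of the Poisson distribution with parameter `lam`. -/
noncomputable def poissonPMF (lam : ℝ) (i : ℕ) : ℝ :=
  Real.exp (-lam) * lam ^ i / (Nat.factorial i)

/-- The expectation of `f X` where `X ~ Poisson(lam)`. -/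
noncomputable def poissonE (lam : ℝ) (f : ℕ → ℝ) : ℝ :=
  ∑' i : ℕ, poissonPMF lam i * f i

/-- The variance of `f X` where `X ~ Poisson(lam)`. -/
noncomputable def poissonVar (lam : ℝ) (f : ℕ → ℝ) : ℝ :=
  poissonE lam (fun i => (f i) ^ 2) - (poissonE lam f) ^ 2

open Finset in
lemma poissonPMF_hasSum (lam : ℝ) : HasSum (poissonPMF lam) 1 := by
  have h : HasSum (fun i : ℕ => lam ^ i / (Nat.factorial i : ℝ)) (Real.exp lam) := by
    rw [Real.exp_eq_exp_ℝ]
    exact NormedSpace.expSeries_div_hasSum_exp lam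
  have := h.mul_left (Real.exp (-lam))
  rw [← Real.exp_add, neg_add_cancel, Real.exp_zero] at this
  refine this.congr_fun fun i => ?_
  simp [poissonPMF, mul_div_assoc]

/-- The shift identity: `pmf (j+m) * (j+m)^{\underline m} = lam^m * pmf j`. -/
lemma poissonPMF_shift (lam : ℝ) (m j : ℕ) :
    poissonPMF lam (j + m) * ((j + m).descFactorial m : ℝ) = lam ^ m * poissonPMF lam j := by
  have hfac : ((Nat.factorial j : ℝ)) * ((j + m).descFactorial m : ℝ)
      = (Nat.factorial (j + m) : ℝ) := by
    have := Nat.factorial_mul_descFactorial (Nat.le_add_left m j)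
    simp only [Nat.add_sub_cancel] at this
    exact_mod_cast this
  have h1 : (Nat.factorial (j + m) : ℝ) ≠ 0 := Nat.cast_ne_zero.2 (Nat.factorial_ne_zero _)
  have h2 : (Nat.factorial j : ℝ) ≠ 0 := Nat.cast_ne_zero.2 (Nat.factorial_ne_zero _)
  simp only [poissonPMF, pow_add]
  field_simp
  linear_combination (lam ^ j * lam ^ m) * hfac

lemma poisson_descFactorial_hasSum (lam : ℝ) (m : ℕ) :
    HasSum (fun i : ℕ => poissonPMF lam i * (Nat.descFactorial i m : ℝ)) (lam ^ m) := by
  have hinj : Function.Injective (fun j : ℕ => j + m) := fun a b h => by simpa using h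
  have hvan : ∀ x ∉ Set.range (fun j : ℕ => j + m),
      poissonPMF lam x * (Nat.descFactorial x m : ℝ) = 0 := by
    intro x hx
    have hlt : x < m := by
      by_contra h
      exact hx ⟨x - m, show x - m + m = x by omega⟩
    rw [Nat.descFactorial_eq_zero_iff_lt.2 hlt]
    simp
  refine (hinj.hasSum_iff hvan).1 ?_
  have h := (poissonPMF_hasSum lam).mul_left (lam ^ m)
  rw [mul_one] at h
  exact h.congr_fun fun j => poissonPMF_shift lam m j

open Finset in
/-- Vandermonde identity for descending factorials. -/
lemma descFactorial_vandermonde (j r : ℕ) :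
    (j + r).descFactorial r
      = ∑ b ∈ range (r + 1), r.choose b * (r.descFactorial b * j.descFactorial (r - b)) := by
  rw [Nat.descFactorial_eq_factorial_mul_choose, Nat.add_choose_eq,
    Finset.Nat.sum_antidiagonal_eq_sum_range_succ (fun a b => j.choose a * r.choose b),
    Finset.mul_sum, ← Finset.sum_range_reflect]
  simp only [Nat.succ_sub_one]
  refine Finset.sum_congr rfl fun b hb => ?_
  have hbr : b ≤ r := by simp at hb; omega
  have h1 : r - (r - b) = b := by omega
  rw [h1, Nat.descFactorial_eq_factorial_mul_choose r b,
    Nat.descFactorial_eq_factorial_mul_choose j (r - b)]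
  have key : r.choose b * b.factorial * (r - b).factorial = r.factorial :=
    Nat.choose_mul_factorial_mul_factorial hbr
  calc r.factorial * (j.choose (r - b) * r.choose b)
      = (r.choose b * b.factorial * (r - b).factorial) * (j.choose (r - b) * r.choose b) := by
        rw [key]
    _ = r.choose b * (b.factorial * r.choose b * ((r - b).factorial * j.choose (r - b))) := by
        ring

open Finset in
lemma poisson_sq_hasSum (lam : ℝ) (r : ℕ) :
    HasSum (fun i : ℕ => poissonPMF lam i * (Nat.descFactorial i r : ℝ) ^ 2)
      (lam ^ r * ∑ b ∈ range (r + 1),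
        ((r.choose b : ℝ) * (r.descFactorial b : ℝ)) * lam ^ (r - b)) := by
  have hinj : Function.Injective (fun j : ℕ => j + r) := fun a b h => by simpa using h
  have hvan : ∀ x ∉ Set.range (fun j : ℕ => j + r),
      poissonPMF lam x * (Nat.descFactorial x r : ℝ) ^ 2 = 0 := by
    intro x hx
    have hlt : x < r := by
      by_contra h
      exact hx ⟨x - r, show x - r + r = x by omega⟩
    rw [Nat.descFactorial_eq_zero_iff_lt.2 hlt]
    simp
  refine (hinj.hasSum_iff hvan).1 ?_
  have hterm : ∀ b ∈ range (r + 1), HasSum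
      (fun j : ℕ => (lam ^ r * ((r.choose b : ℝ) * (r.descFactorial b : ℝ))) *
        (poissonPMF lam j * (Nat.descFactorial j (r - b) : ℝ)))
      ((lam ^ r * ((r.choose b : ℝ) * (r.descFactorial b : ℝ))) * lam ^ (r - b)) :=
    fun b _ => (poisson_descFactorial_hasSum lam (r - b)).mul_left _
  have hsum := hasSum_sum (f := fun b (j : ℕ) =>
      (lam ^ r * ((r.choose b : ℝ) * (r.descFactorial b : ℝ))) *
        (poissonPMF lam j * (Nat.descFactorial j (r - b) : ℝ)))
    (s := range (r + 1)) hterm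
  have hval : (∑ b ∈ range (r + 1),
        (lam ^ r * ((r.choose b : ℝ) * (r.descFactorial b : ℝ))) * lam ^ (r - b))
      = lam ^ r * ∑ b ∈ range (r + 1),
        ((r.choose b : ℝ) * (r.descFactorial b : ℝ)) * lam ^ (r - b) := by
    rw [Finset.mul_sum]
    exact Finset.sum_congr rfl fun b _ => by ring
  rw [← hval]
  refine hsum.congr_fun fun j => ?_
  show poissonPMF lam (j + r) * ((j + r).descFactorial r : ℝ) ^ 2 = _
  have hv : ((j + r).descFactorial r : ℝ) = ∑ b ∈ range (r + 1),
      (r.choose b : ℝ) * ((r.descFactorial b : ℝ) * (j.descFactorial (r - b) : ℝ)) := by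
    have := descFactorial_vandermonde j r
    push_cast [this]
    ring
  rw [sq, ← mul_assoc, poissonPMF_shift lam r j, mul_assoc, hv, Finset.mul_sum, Finset.mul_sum]
  exact Finset.sum_congr rfl fun b _ => by ring

theorem poisson_descFactorial_variance (lam : ℝ) (hlam : 0 < lam)
    (r : ℕ) (hr : 0 < r) :
    poissonVar lam (fun i => (Nat.descFactorial i r : ℝ)) ≤
      lam ^ r * ((lam + r) ^ r - lam ^ r) := by
  have hvar : poissonVar lam (fun i => (Nat.descFactorial i r : ℝ))
      = lam ^ r * (∑ b ∈ Finset.range (r + 1),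
          ((r.choose b : ℝ) * (r.descFactorial b : ℝ)) * lam ^ (r - b)) - (lam ^ r) ^ 2 := by
    unfold poissonVar poissonE
    rw [(poisson_sq_hasSum lam r).tsum_eq, (poisson_descFactorial_hasSum lam r).tsum_eq]
  rw [hvar]
  have hT : (∑ b ∈ Finset.range (r + 1),
      ((r.choose b : ℝ) * (r.descFactorial b : ℝ)) * lam ^ (r - b)) ≤ (lam + r) ^ r := by
    have hbin : (lam + (r : ℝ)) ^ r
        = ∑ b ∈ Finset.range (r + 1), (r : ℝ) ^ b * lam ^ (r - b) * (r.choose b : ℝ) := by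
      rw [add_comm lam (r : ℝ)]
      exact add_pow _ _ _
    rw [hbin]
    refine Finset.sum_le_sum fun b _ => ?_
    have h1 : (r.descFactorial b : ℝ) ≤ (r : ℝ) ^ b := by
      exact_mod_cast Nat.descFactorial_le_pow r b
    have h2 : (0 : ℝ) ≤ lam ^ (r - b) := by positivity
    have h3 : (0 : ℝ) ≤ (r.choose b : ℝ) := by positivity
    have h := mul_le_mul_of_nonneg_left (mul_le_mul_of_nonneg_right h1 h2) h3
    calc ((r.choose b : ℝ) * (r.descFactorial b : ℝ)) * lam ^ (r - b)
        = (r.choose b : ℝ) * ((r.descFactorial b : ℝ) * lam ^ (r - b)) := by ring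
      _ ≤ (r.choose b : ℝ) * ((r : ℝ) ^ b * lam ^ (r - b)) := h
      _ = (r : ℝ) ^ b * lam ^ (r - b) * (r.choose b : ℝ) := by ring
  have hpos : (0 : ℝ) < lam ^ r := pow_pos hlam r
  nlinarith [mul_le_mul_of_nonneg_left hT (le_of_lt hpos)]
end

section
/- Let p be a probability distribution over an alphabet of k elements, let n > 0, and let (N_x)_x be independent with N_x ~ Poisson(n p_x). Then for every integer α > 1, the variance of the bias-corrected estimator satisfies Var( Σ_x N_x^{\underline{α}} / n^α ) ≤ (1/n^{2α}) Σ_{r=0}^{α−1} n^{α+r} · C(α, r) · α^{α−r} · P_{α+r}(p), and consequently Var( Σ_x N_x^{\underline{α}} / n^α ) / P_α(p)² ≤ Σ_{r=0}^{α−1} ( α² k^{(α−1)/α} / n )^{α−r}. -/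
open MeasureTheory ProbabilityTheory Real

lemma _root_.poissonPMF_nonneg {lam : ℝ} (h : 0 ≤ lam) (i : ℕ) : 0 ≤ _root_.poissonPMF lam i := by
  unfold _root_.poissonPMF
  positivity

noncomputable def pshift (lam : ℝ) (m : ℕ) (i : ℕ) : ℝ :=
  if m ≤ i then lam ^ (i - m) / (Nat.factorial (i - m)) else 0

lemma poisson_desc_eq {lam : ℝ} (m i : ℕ) :
    _root_.poissonPMF lam i * (i.descFactorial m : ℝ)
      = Real.exp (-lam) * lam ^ m * pshift lam m i := by
  unfold _root_.poissonPMF pshift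
  by_cases h : m ≤ i
  · rw [if_pos h]
    have hfac : ((i - m).factorial : ℝ) * (i.descFactorial m : ℝ) = (i.factorial : ℝ) := by
      exact_mod_cast congrArg (Nat.cast : ℕ → ℝ) (Nat.factorial_mul_descFactorial h)
    have h1 : (i.descFactorial m : ℝ) = (i.factorial : ℝ) / ((i - m).factorial : ℝ) := by
      field_simp at hfac ⊢
      linarith
    have hpow : lam ^ i = lam ^ m * lam ^ (i - m) := by
      rw [← pow_add]; congr 1; omega
    rw [h1, hpow]
    have f1 : (i.factorial : ℝ) ≠ 0 := Nat.cast_ne_zero.mpr i.factorial_ne_zero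
    have f2 : ((i - m).factorial : ℝ) ≠ 0 := Nat.cast_ne_zero.mpr (i - m).factorial_ne_zero
    field_simp
  · rw [if_neg h, Nat.descFactorial_eq_zero_iff_lt.mpr (by omega)]
    simp

lemma summable_pshift {lam : ℝ} (m : ℕ) : Summable (pshift lam m) := by
  rw [← summable_nat_add_iff m]
  have : (fun i => pshift lam m (i + m)) = fun i => lam ^ i / (Nat.factorial i) := by
    funext i
    unfold pshift
    rw [if_pos (by omega)]
    simp
  rw [this]
  exact Real.summable_pow_div_factorial lam

lemma tsum_pshift {lam : ℝ} (m : ℕ) : ∑' i, pshift lam m i = Real.exp lam := by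
  rw [← Summable.sum_add_tsum_nat_add m (summable_pshift (lam := lam) m)]
  have h0 : ∑ i ∈ Finset.range m, pshift lam m i = 0 := by
    apply Finset.sum_eq_zero
    intro i hi
    unfold pshift
    rw [if_neg (by simp at hi; omega)]
  have h1 : (fun i => pshift lam m (i + m)) = fun i => lam ^ i / (Nat.factorial i) := by
    funext i
    unfold pshift
    rw [if_pos (by omega)]
    simp
  rw [h0, h1, zero_add]
  rw [Real.exp_eq_exp_ℝ, NormedSpace.exp_eq_tsum_div]

lemma summable_poisson_desc (lam : ℝ) (m : ℕ) :
    Summable (fun i => _root_.poissonPMF lam i * (i.descFactorial m : ℝ)) := by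
  have : (fun i => _root_.poissonPMF lam i * (i.descFactorial m : ℝ))
      = fun i => Real.exp (-lam) * lam ^ m * pshift lam m i := by
    funext i; exact poisson_desc_eq m i
  rw [this]
  exact (summable_pshift m).mul_left _

lemma tsum_poisson_desc (lam : ℝ) (m : ℕ) :
    ∑' i, _root_.poissonPMF lam i * (i.descFactorial m : ℝ) = lam ^ m := by
  have h : (fun i => _root_.poissonPMF lam i * (i.descFactorial m : ℝ))
      = fun i => Real.exp (-lam) * lam ^ m * pshift lam m i := by
    funext i; exact poisson_desc_eq m i
  rw [h, tsum_mul_left, tsum_pshift]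
  rw [Real.exp_neg]
  have : Real.exp lam ≠ 0 := (Real.exp_pos lam).ne'
  field_simp

noncomputable def dsc (x : ℝ) : ℕ → ℝ
  | 0 => 1
  | m+1 => dsc x m * (x - m)

lemma dsc_cast (i : ℕ) : ∀ m : ℕ, (i.descFactorial m : ℝ) = dsc (i : ℝ) m
  | 0 => by simp [dsc]
  | m+1 => by
    rw [Nat.descFactorial_succ, dsc, ← dsc_cast i m]
    rcases le_or_gt m i with h | h
    · push_cast [h]; ring
    · rw [Nat.sub_eq_zero_of_le h.le, Nat.descFactorial_eq_zero_iff_lt.mpr h]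
      simp

lemma choose_real (a r : ℕ) :
    (a.choose r : ℝ) * ((a : ℝ) - r) = (a.choose (r+1) : ℝ) * (r+1) := by
  rcases le_or_gt r a with h | h
  · have := Nat.choose_succ_right_eq a r
    have h' : ((a.choose (r+1) * (r+1) : ℕ) : ℝ) = ((a.choose r * (a - r) : ℕ) : ℝ) := by
      rw [this]
    push_cast [h] at h'
    linarith
  · rw [Nat.choose_eq_zero_of_lt h, Nat.choose_eq_zero_of_lt (by omega)]
    simp

lemma dsc_succ (x : ℝ) (m : ℕ) : dsc x (m+1) = dsc x m * (x - m) := rfl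

lemma dsc_mul (x : ℝ) (a : ℕ) : ∀ b : ℕ, dsc x a * dsc x b =
    ∑ r ∈ Finset.range (b+1),
      (a.choose r : ℝ) * (b.choose r) * (r.factorial) * dsc x (a + b - r)
  | 0 => by simp [dsc]
  | b+1 => by
    have IH := dsc_mul x a b
    have key : ∀ r ∈ Finset.range (b+1),
        (a.choose r : ℝ) * (b.choose r) * (r.factorial) * dsc x (a + b - r) * (x - b)
        = (a.choose r : ℝ) * (b.choose r) * (r.factorial) * dsc x (a + (b+1) - r)
          + ((a.choose (r+1) : ℝ) * ((b+1).choose (r+1)) * ((r+1).factorial)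
             - (a.choose (r+1) : ℝ) * (b.choose (r+1)) * ((r+1).factorial))
            * dsc x (a + b - r) := by
      intro r hr
      have hrb : r ≤ b := Nat.lt_succ_iff.mp (Finset.mem_range.mp hr)
      have hcast : ((a + b - r : ℕ) : ℝ) = (a : ℝ) + b - r := by
        push_cast [show r ≤ a + b by omega]; ring
      have hsucc : a + (b+1) - r = (a + b - r) + 1 := by omega
      have hd : ((a.choose (r+1) : ℝ) * ((b+1).choose (r+1)) * ((r+1).factorial)
             - (a.choose (r+1) : ℝ) * (b.choose (r+1)) * ((r+1).factorial))
          = (a.choose r : ℝ) * (b.choose r) * (r.factorial) * ((a:ℝ) - r) := by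
        have hp : (((b+1).choose (r+1) : ℕ) : ℝ) = (b.choose r : ℝ) + (b.choose (r+1)) := by
          rw [Nat.choose_succ_succ]; push_cast; ring
        have hc := choose_real a r
        have hfac : (((r+1).factorial : ℕ) : ℝ) = (r+1) * (r.factorial) := by
          rw [Nat.factorial_succ]; push_cast; ring
        rw [hp, hfac]
        linear_combination (-((b.choose r : ℝ) * (r.factorial : ℝ))) * hc
      rw [hsucc, dsc_succ, hcast, hd]
      ring
    calc dsc x a * dsc x (b+1)
        = (dsc x a * dsc x b) * (x - b) := by rw [dsc_succ]; ring
      _ = (∑ r ∈ Finset.range (b+1),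
            (a.choose r : ℝ) * (b.choose r) * (r.factorial) * dsc x (a + b - r)) * (x - b) := by
          rw [IH]
      _ = ∑ r ∈ Finset.range (b+1),
            (a.choose r : ℝ) * (b.choose r) * (r.factorial) * dsc x (a + b - r) * (x - b) := by
          rw [Finset.sum_mul]
      _ = ∑ r ∈ Finset.range (b+1),
            ((a.choose r : ℝ) * (b.choose r) * (r.factorial) * dsc x (a + (b+1) - r)
            + ((a.choose (r+1) : ℝ) * ((b+1).choose (r+1)) * ((r+1).factorial)
               - (a.choose (r+1) : ℝ) * (b.choose (r+1)) * ((r+1).factorial))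
              * dsc x (a + b - r)) := Finset.sum_congr rfl key
      _ = (∑ r ∈ Finset.range (b+1),
            (a.choose r : ℝ) * (b.choose r) * (r.factorial) * dsc x (a + (b+1) - r))
          + ∑ r ∈ Finset.range (b+1),
            ((a.choose (r+1) : ℝ) * ((b+1).choose (r+1)) * ((r+1).factorial)
               - (a.choose (r+1) : ℝ) * (b.choose (r+1)) * ((r+1).factorial))
              * dsc x (a + (b+1) - (r+1)) := by
          rw [Finset.sum_add_distrib]
          congr 1
          refine Finset.sum_congr rfl fun r hr => ?_
          have hrb : r ≤ b := Nat.lt_succ_iff.mp (Finset.mem_range.mp hr)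
          congr 2
          omega
      _ = (∑ r ∈ Finset.range (b+2),
            (a.choose r : ℝ) * (b.choose r) * (r.factorial) * dsc x (a + (b+1) - r))
          + ∑ r ∈ Finset.range (b+2),
            ((a.choose r : ℝ) * ((b+1).choose r) * (r.factorial)
               - (a.choose r : ℝ) * (b.choose r) * (r.factorial))
              * dsc x (a + (b+1) - r) := by
          rw [Finset.sum_range_succ (n := b+1), Finset.sum_range_succ' (n := b+1)]
          simp [Nat.choose_eq_zero_of_lt (Nat.lt_succ_self b)]
      _ = ∑ r ∈ Finset.range ((b+1)+1),
            (a.choose r : ℝ) * ((b+1).choose r) * (r.factorial) * dsc x (a + (b+1) - r) := by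
          rw [← Finset.sum_add_distrib]
          refine Finset.sum_congr rfl fun r _ => ?_
          ring
lemma integral_comp_nat {Ω : Type*} [MeasurableSpace Ω] (μ : Measure Ω) [IsProbabilityMeasure μ]
    (Nx : Ω → ℕ) (hm : Measurable Nx) (lam : ℝ) (hlam : 0 ≤ lam)
    (hlaw : ∀ i, μ {ω | Nx ω = i} = ENNReal.ofReal (_root_.poissonPMF lam i))
    (g : ℕ → ℝ) (hg : ∀ i, 0 ≤ g i)
    (hsum : Summable fun i => _root_.poissonPMF lam i * g i) :
    Integrable (fun ω => g (Nx ω)) μ ∧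
      ∫ ω, g (Nx ω) ∂μ = ∑' i, _root_.poissonPMF lam i * g i := by
  have hν : ∀ i : ℕ, (μ.map Nx) {i} = ENNReal.ofReal (_root_.poissonPMF lam i) := by
    intro i
    rw [Measure.map_apply hm (measurableSet_singleton i)]
    have : Nx ⁻¹' {i} = {ω | Nx ω = i} := by ext ω; simp
    rw [this]; exact hlaw i
  have L : ∫⁻ ω, ENNReal.ofReal (g (Nx ω)) ∂μ
      = ENNReal.ofReal (∑' i, _root_.poissonPMF lam i * g i) := by
    calc ∫⁻ ω, ENNReal.ofReal (g (Nx ω)) ∂μ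
        = ∫⁻ i, ENNReal.ofReal (g i) ∂(μ.map Nx) := by
          rw [lintegral_map (measurable_from_nat) hm]
      _ = ∑' i, ENNReal.ofReal (g i) * (μ.map Nx) {i} := lintegral_countable' _
      _ = ∑' i, ENNReal.ofReal (_root_.poissonPMF lam i * g i) := by
          congr 1; funext i
          rw [hν i, ← ENNReal.ofReal_mul (hg i), mul_comm (g i)]
      _ = ENNReal.ofReal (∑' i, _root_.poissonPMF lam i * g i) := by
          rw [ENNReal.ofReal_tsum_of_nonneg
            (fun i => mul_nonneg (poissonPMF_nonneg hlam i) (hg i)) hsum]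
  have hae : AEStronglyMeasurable (fun ω => g (Nx ω)) μ :=
    ((measurable_from_nat : Measurable g).comp hm).aestronglyMeasurable
  have hnonneg : 0 ≤ᵐ[μ] fun ω => g (Nx ω) := Filter.Eventually.of_forall fun ω => hg _
  have hint : Integrable (fun ω => g (Nx ω)) μ := by
    refine ⟨hae, ?_⟩
    rw [hasFiniteIntegral_iff_ofReal hnonneg, L]
    exact ENNReal.ofReal_lt_top
  refine ⟨hint, ?_⟩
  rw [integral_eq_lintegral_of_nonneg_ae hnonneg hae, L,
    ENNReal.toReal_ofReal
      (tsum_nonneg fun i => mul_nonneg (poissonPMF_nonneg hlam i) (hg i))]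

lemma poisson_var_bound {Ω : Type*} [MeasurableSpace Ω] (μ : Measure Ω) [IsProbabilityMeasure μ]
    (Nx : Ω → ℕ) (hm : Measurable Nx) (lam : ℝ) (hlam : 0 ≤ lam)
    (hlaw : ∀ i, μ {ω | Nx ω = i} = ENNReal.ofReal (_root_.poissonPMF lam i))
    (α : ℕ) (hα : 1 ≤ α) :
    MemLp (fun ω => ((Nx ω).descFactorial α : ℝ)) 2 μ ∧
    variance (fun ω => ((Nx ω).descFactorial α : ℝ)) μ
      ≤ ∑ s ∈ Finset.range α, (α.choose s : ℝ) * (α : ℝ) ^ (α - s) * lam ^ (α + s) := by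
  set F : Ω → ℝ := fun ω => ((Nx ω).descFactorial α : ℝ) with hF
  have h1 := integral_comp_nat μ Nx hm lam hlam hlaw (fun i => (i.descFactorial α : ℝ))
    (fun i => Nat.cast_nonneg _) (summable_poisson_desc lam α)
  have E1 : ∫ ω, F ω ∂μ = lam ^ α := h1.2.trans (tsum_poisson_desc lam α)
  -- square expansion
  have hg2eq : ∀ i : ℕ, ((i.descFactorial α : ℝ)) ^ 2
      = ∑ r ∈ Finset.range (α+1),
          (α.choose r : ℝ) * (α.choose r) * (r.factorial) * ((i.descFactorial (α + α - r) : ℝ)) := by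
    intro i
    rw [sq, dsc_cast, dsc_mul]
    exact Finset.sum_congr rfl fun r _ => by rw [dsc_cast]
  have hsum2 : Summable (fun i => _root_.poissonPMF lam i * ((i.descFactorial α : ℝ)) ^ 2) := by
    have : (fun i => _root_.poissonPMF lam i * ((i.descFactorial α : ℝ)) ^ 2)
        = fun i => ∑ r ∈ Finset.range (α+1),
            (α.choose r : ℝ) * (α.choose r) * (r.factorial)
              * (_root_.poissonPMF lam i * (i.descFactorial (α + α - r) : ℝ)) := by
      funext i
      rw [hg2eq i, Finset.mul_sum]
      exact Finset.sum_congr rfl fun r _ => by ring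
    rw [this]
    exact summable_sum fun r _ => (summable_poisson_desc lam (α + α - r)).mul_left _
  have h2 := integral_comp_nat μ Nx hm lam hlam hlaw (fun i => ((i.descFactorial α : ℝ)) ^ 2)
    (fun i => sq_nonneg _) hsum2
  have E2 : ∫ ω, (F ω) ^ 2 ∂μ
      = ∑ r ∈ Finset.range (α+1),
          (α.choose r : ℝ) * (α.choose r) * (r.factorial) * lam ^ (α + α - r) := by
    rw [h2.2]
    have : (fun i => _root_.poissonPMF lam i * ((i.descFactorial α : ℝ)) ^ 2)
        = fun i => ∑ r ∈ Finset.range (α+1),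
            (α.choose r : ℝ) * (α.choose r) * (r.factorial)
              * (_root_.poissonPMF lam i * (i.descFactorial (α + α - r) : ℝ)) := by
      funext i
      rw [hg2eq i, Finset.mul_sum]
      exact Finset.sum_congr rfl fun r _ => by ring
    rw [this, Summable.tsum_finsetSum
      (fun r _ => ((summable_poisson_desc lam (α + α - r)).mul_left _))]
    refine Finset.sum_congr rfl fun r _ => ?_
    rw [tsum_mul_left, tsum_poisson_desc]
  have hae : AEStronglyMeasurable F μ :=
    ((measurable_from_nat : Measurable (fun i : ℕ => ((i.descFactorial α : ℝ)))).comp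
      hm).aestronglyMeasurable
  have hmem : MemLp F 2 μ := by
    rw [memLp_two_iff_integrable_sq hae]
    exact h2.1
  refine ⟨hmem, ?_⟩
  have hvar : variance F μ
      = ∑ r ∈ Finset.range α,
          (α.choose (r+1) : ℝ) * (α.choose (r+1)) * ((r+1).factorial) * lam ^ (α + α - (r+1)) := by
    rw [variance_eq_sub hmem]
    have hXsq : ∫ ω, (F ^ 2) ω ∂μ = ∫ ω, (F ω) ^ 2 ∂μ := rfl
    rw [hXsq, E2, E1, Finset.sum_range_succ']
    simp only [Nat.choose_zero_right, Nat.cast_one, Nat.factorial_zero, Nat.sub_zero]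
    have hsq : (lam ^ α) ^ 2 = lam ^ (α + α) := by
      rw [← pow_mul]; congr 1; omega
    rw [hsq]; ring
  rw [hvar, ← Finset.sum_range_reflect]
  refine Finset.sum_le_sum fun j hj => ?_
  have hjα : j < α := Finset.mem_range.mp hj
  have e1 : α - 1 - j + 1 = α - j := by omega
  have e2 : α + α - (α - j) = α + j := by omega
  rw [e1, e2]
  have hnat : α.choose (α - j) * α.choose (α - j) * (α - j).factorial
      ≤ α.choose j * α ^ (α - j) := by
    rw [Nat.choose_symm hjα.le]
    calc α.choose j * α.choose j * (α - j).factorial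
        = α.choose j * ((α - j).factorial * α.choose (α - j)) := by
          rw [Nat.choose_symm hjα.le]; ring
      _ = α.choose j * α.descFactorial (α - j) := by
          rw [← Nat.descFactorial_eq_factorial_mul_choose]
      _ ≤ α.choose j * α ^ (α - j) :=
          Nat.mul_le_mul_left _ (Nat.descFactorial_le_pow _ _)
  calc (α.choose (α - j) : ℝ) * (α.choose (α - j)) * ((α - j).factorial) * lam ^ (α + j)
      ≤ ((α.choose j : ℝ) * (α : ℝ) ^ (α - j)) * lam ^ (α + j) := by
        apply mul_le_mul_of_nonneg_right _ (pow_nonneg hlam _)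
        exact_mod_cast hnat
    _ = (α.choose j : ℝ) * (α : ℝ) ^ (α - j) * lam ^ (α + j) := by ring
lemma term_bound (a r : ℕ) (hr : r < a) (n c P Q t u : ℝ)
    (hn : 0 < n) (ht : 0 < t) (hu : 0 < u) (hP : t ^ a = P)
    (hQ0 : 0 ≤ Q) (hQ : Q ≤ t ^ r * P) (htu : 1 ≤ t * u)
    (hc : 0 ≤ c) (hcb : c ≤ (a : ℝ) ^ (a - r)) :
    n ^ (a + r) * c * (a : ℝ) ^ (a - r) * Q / (n ^ (2*a) * P ^ 2)
      ≤ ((a : ℝ) ^ 2 * u / n) ^ (a - r) := by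
  set m := a - r with hm
  have hP0 : 0 < P := hP ▸ pow_pos ht a
  have ha0 : (0:ℝ) ≤ (a:ℝ) := Nat.cast_nonneg a
  have hn2 : n ^ (2*a) = n ^ (a+r) * n ^ m := by rw [← pow_add]; congr 1; omega
  have hPt : P = t ^ r * t ^ m := by rw [← hP, ← pow_add]; congr 1; omega
  have step1 : n ^ (a + r) * c * (a : ℝ) ^ m * Q / (n ^ (2*a) * P ^ 2)
      ≤ n ^ (a + r) * c * (a : ℝ) ^ m * (t ^ r * P) / (n ^ (2*a) * P ^ 2) :=
    div_le_div_of_nonneg_right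
      (mul_le_mul_of_nonneg_left hQ (by positivity)) (by positivity)
  have step2 : n ^ (a + r) * c * (a : ℝ) ^ m * (t ^ r * P) / (n ^ (2*a) * P ^ 2)
      = c * (a : ℝ) ^ m * (1 / t ^ m) / n ^ m := by
    rw [hn2, hPt]
    field_simp
  have h1m : 1 / t ^ m ≤ u ^ m := by
    rw [div_le_iff₀ (pow_pos ht m)]
    calc (1:ℝ) = 1 ^ m := (one_pow m).symm
      _ ≤ (t * u) ^ m := pow_le_pow_left₀ (by norm_num) htu m
      _ = u ^ m * t ^ m := by rw [mul_pow]; ring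
  have step3 : c * (a : ℝ) ^ m * (1 / t ^ m) / n ^ m
      ≤ ((a : ℝ) ^ m * (a : ℝ) ^ m * u ^ m) / n ^ m := by
    apply div_le_div_of_nonneg_right _ (pow_pos hn m).le
    have h1 : c * (a : ℝ) ^ m ≤ (a : ℝ) ^ m * (a : ℝ) ^ m :=
      mul_le_mul_of_nonneg_right hcb (by positivity)
    calc c * (a : ℝ) ^ m * (1 / t ^ m)
        ≤ ((a : ℝ) ^ m * (a : ℝ) ^ m) * u ^ m :=
          mul_le_mul h1 h1m (by positivity) (by positivity)
      _ = (a : ℝ) ^ m * (a : ℝ) ^ m * u ^ m := by ring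
  have hRHS : ((a : ℝ) ^ 2 * u / n) ^ m = ((a : ℝ) ^ m * (a : ℝ) ^ m * u ^ m) / n ^ m := by
    rw [div_pow, mul_pow, ← pow_mul, two_mul, pow_add]
  rw [hRHS]
  exact (step1.trans_eq step2).trans step3

lemma sum_pow_bound {X : Type*} [Fintype X] (p : X → ℝ) (hp0 : ∀ x, 0 ≤ p x) (a r : ℕ)
    (ha : 0 < a) (hPpos : 0 < ∑ x, p x ^ a) :
    ∑ x, p x ^ (a + r) ≤ ((∑ x, p x ^ a) ^ ((1:ℝ)/a)) ^ r * ∑ x, p x ^ a := by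
  set P := ∑ x, p x ^ a with hP
  set t := P ^ ((1:ℝ)/a) with htdef
  have hple : ∀ x, p x ≤ t := by
    intro x
    have h1 : p x ^ a ≤ P :=
      Finset.single_le_sum (fun y _ => pow_nonneg (hp0 y) a) (Finset.mem_univ x)
    have h2 : ((p x ^ a : ℝ)) ^ ((1:ℝ)/a) ≤ t :=
      Real.rpow_le_rpow (pow_nonneg (hp0 x) a) h1 (by positivity)
    have h3 : ((p x ^ a : ℝ)) ^ ((1:ℝ)/a) = p x := by
      rw [← Real.rpow_natCast (p x) a, ← Real.rpow_mul (hp0 x), mul_one_div,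
        div_self (by exact_mod_cast ha.ne'), Real.rpow_one]
    rwa [h3] at h2
  calc ∑ x, p x ^ (a + r) = ∑ x, p x ^ a * p x ^ r := by
        refine Finset.sum_congr rfl fun x _ => ?_; rw [pow_add]
    _ ≤ ∑ x, p x ^ a * t ^ r := by
        refine Finset.sum_le_sum fun x _ => ?_
        exact mul_le_mul_of_nonneg_left
          (pow_le_pow_left₀ (hp0 x) (hple x) r) (pow_nonneg (hp0 x) a)
    _ = t ^ r * P := by rw [← Finset.sum_mul, mul_comm]

lemma t_pow_eq {P : ℝ} (hPpos : 0 < P) {a : ℕ} (ha : a ≠ 0) : (P ^ ((1:ℝ)/a)) ^ a = P := by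
  rw [← Real.rpow_natCast (P ^ ((1:ℝ)/a)) a, ← Real.rpow_mul hPpos.le, one_div,
    inv_mul_cancel₀ (by exact_mod_cast ha), Real.rpow_one]

lemma tu_ge_one {k a : ℕ} (hk : 0 < k) (ha : 0 < a) {P : ℝ} (hPpos : 0 < P)
    (hPlb : 1 / (k:ℝ) ^ (a-1) ≤ P) :
    1 ≤ P ^ ((1:ℝ)/a) * (k:ℝ) ^ (((a:ℝ)-1)/a) := by
  have hk0 : (0:ℝ) < (k:ℝ) := by exact_mod_cast hk
  set u := (k:ℝ) ^ (((a:ℝ)-1)/a) with hu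
  have hu0 : 0 < u := Real.rpow_pos_of_pos hk0 _
  have hbase : (1 / (k:ℝ) ^ (a-1) : ℝ) = (k:ℝ) ^ (-((a:ℝ)-1)) := by
    rw [← Real.rpow_natCast (k:ℝ) (a-1), Real.rpow_neg hk0.le, one_div]
    congr 2
    have : ((a - 1 : ℕ) : ℝ) = (a:ℝ) - 1 := by
      have := Nat.one_le_iff_ne_zero.mpr ha.ne'
      push_cast [this]; ring
    rw [this]
  have hstep : ((k:ℝ) ^ (-((a:ℝ)-1))) ^ ((1:ℝ)/a) = u⁻¹ := by
    rw [← Real.rpow_mul hk0.le, hu, ← Real.rpow_neg hk0.le]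
    congr 1
    ring
  have ht : u⁻¹ ≤ P ^ ((1:ℝ)/a) := by
    rw [← hstep, ← hbase]
    exact Real.rpow_le_rpow (by positivity) hPlb (by positivity)
  calc (1:ℝ) = u⁻¹ * u := by rw [inv_mul_cancel₀ hu0.ne']
    _ ≤ P ^ ((1:ℝ)/a) * u := mul_le_mul_of_nonneg_right ht hu0.le

lemma choose_le_pow_sub (a r : ℕ) (hr : r ≤ a) : a.choose r ≤ a ^ (a - r) := by
  rw [← Nat.choose_symm hr]
  calc a.choose (a - r) ≤ (a-r).factorial * a.choose (a - r) :=
        Nat.le_mul_of_pos_left _ (Nat.factorial_pos _)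
    _ = a.descFactorial (a - r) := (Nat.descFactorial_eq_factorial_mul_choose _ _).symm
    _ ≤ a ^ (a - r) := Nat.descFactorial_le_pow _ _

/-- Variance bound for the bias-corrected estimator of the power sum `P_α(p)` under Poisson
sampling, for integer `α > 1`. -/
theorem biasCorrected_variance_bound {X : Type*} [Fintype X] {k : ℕ}
    (hk : Fintype.card X = k)
    (p : X → ℝ) (hp : IsDist p) (n : ℝ) (hn : 0 < n)
    {Ω : Type*} [MeasurableSpace Ω] (μ : Measure Ω) [IsProbabilityMeasure μ]
    (N : X → Ω → ℕ) (hmeas : ∀ x, Measurable (N x))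
    (hindep : iIndepFun N μ)
    (hpois : ∀ x i, μ {ω | N x ω = i} = ENNReal.ofReal (poissonPMF (n * p x) i))
    (α : ℕ) (hα : 1 < α) :
    variance (fun ω => ∑ x, ((Nat.descFactorial (N x ω) α : ℝ) / n ^ α)) μ ≤
      (1 / n ^ (2 * α)) * ∑ r ∈ Finset.range α,
        n ^ (α + r) * (Nat.choose α r : ℝ) * (α : ℝ) ^ (α - r) *
          (∑ x, p x ^ ((α : ℝ) + r)) ∧
    variance (fun ω => ∑ x, ((Nat.descFactorial (N x ω) α : ℝ) / n ^ α)) μ /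
        (∑ x, p x ^ (α : ℝ)) ^ 2 ≤
      ∑ r ∈ Finset.range α,
        ((α : ℝ) ^ 2 * (k : ℝ) ^ (((α : ℝ) - 1) / α) / n) ^ (α - r) := by
  obtain ⟨hp0, hp1⟩ := hp
  have hα0 : 0 < α := by omega
  have hkpos : 0 < k := by
    rcases Nat.eq_zero_or_pos k with h0 | h; swap; · exact h
    exfalso
    rw [h0] at hk
    have : IsEmpty X := Fintype.card_eq_zero_iff.mp hk
    rw [Finset.univ_eq_empty, Finset.sum_empty] at hp1
    norm_num at hp1
  set F : X → Ω → ℝ := fun x ω => ((N x ω).descFactorial α : ℝ) with hF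
  have hvb := fun x => poisson_var_bound μ (N x) (hmeas x) (n * p x)
    (mul_nonneg hn.le (hp0 x)) (hpois x) α hα.le
  have hGe : (fun ω => ∑ x, ((Nat.descFactorial (N x ω) α : ℝ) / n ^ α))
      = (n ^ α)⁻¹ • ∑ x, F x := by
    funext ω
    simp only [Pi.smul_apply, Finset.sum_apply, smul_eq_mul, hF]
    rw [Finset.mul_sum]
    exact Finset.sum_congr rfl fun x _ => by ring
  have hvarsum : variance (∑ x, F x) μ = ∑ x, variance (F x) μ := by
    apply IndepFun.variance_sum (fun x _ => (hvb x).1)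
    intro i _ j _ hij
    exact (hindep.indepFun hij).comp
      (measurable_from_nat : Measurable (fun m : ℕ => (m.descFactorial α : ℝ)))
      (measurable_from_nat : Measurable (fun m : ℕ => (m.descFactorial α : ℝ)))
  have hV : variance (fun ω => ∑ x, ((Nat.descFactorial (N x ω) α : ℝ) / n ^ α)) μ
      = (1 / n ^ (2 * α)) * ∑ x, variance (F x) μ := by
    rw [hGe, variance_smul, hvarsum]
    congr 1
    rw [inv_pow, ← pow_mul, one_div, mul_comm α 2]
  have hsx : ∑ x, variance (F x) μ
      ≤ ∑ r ∈ Finset.range α,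
          n ^ (α + r) * (Nat.choose α r : ℝ) * (α : ℝ) ^ (α - r) *
            (∑ x, p x ^ ((α : ℝ) + r)) := by
    calc ∑ x, variance (F x) μ
        ≤ ∑ x, ∑ s ∈ Finset.range α,
            (α.choose s : ℝ) * (α : ℝ) ^ (α - s) * (n * p x) ^ (α + s) :=
          Finset.sum_le_sum fun x _ => (hvb x).2
      _ = ∑ s ∈ Finset.range α, ∑ x,
            (α.choose s : ℝ) * (α : ℝ) ^ (α - s) * (n * p x) ^ (α + s) := Finset.sum_comm
      _ = ∑ r ∈ Finset.range α,
          n ^ (α + r) * (Nat.choose α r : ℝ) * (α : ℝ) ^ (α - r) *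
            (∑ x, p x ^ ((α : ℝ) + r)) := by
          refine Finset.sum_congr rfl fun r _ => ?_
          rw [Finset.mul_sum]
          refine Finset.sum_congr rfl fun x _ => ?_
          have hrp : p x ^ ((α : ℝ) + r) = p x ^ (α + r) := by
            have h1 : ((α : ℝ) + r) = ((α + r : ℕ) : ℝ) := by push_cast; ring
            rw [h1, Real.rpow_natCast]
          rw [hrp, mul_pow]
          ring
  have part1 : variance (fun ω => ∑ x, ((Nat.descFactorial (N x ω) α : ℝ) / n ^ α)) μ
      ≤ (1 / n ^ (2 * α)) * ∑ r ∈ Finset.range α,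
          n ^ (α + r) * (Nat.choose α r : ℝ) * (α : ℝ) ^ (α - r) *
            (∑ x, p x ^ ((α : ℝ) + r)) := by
    rw [hV]
    exact mul_le_mul_of_nonneg_left hsx (by positivity)
  refine ⟨part1, ?_⟩
  -- Part 2
  set Pn := ∑ x, p x ^ α with hPn
  have hPeq : (∑ x, p x ^ (α : ℝ)) = Pn := by
    refine Finset.sum_congr rfl fun x _ => ?_
    rw [Real.rpow_natCast]
  have hPlb : 1 / (k:ℝ) ^ (α - 1) ≤ Pn := by
    have h := pow_sum_div_card_le_sum_pow (s := (Finset.univ : Finset X)) (f := p)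
      (fun i _ => hp0 i) (α - 1)
    rw [hp1, one_pow, Finset.card_univ, hk] at h
    have he : α - 1 + 1 = α := by omega
    rw [he] at h
    exact_mod_cast h
  have hPpos : 0 < Pn := lt_of_lt_of_le (by positivity) hPlb
  set t := Pn ^ ((1:ℝ)/α) with ht
  set u := (k:ℝ) ^ (((α:ℝ) - 1) / α) with hu
  have hk0 : (0:ℝ) < (k:ℝ) := by exact_mod_cast hkpos
  have htpos : 0 < t := Real.rpow_pos_of_pos hPpos _
  have hupos : 0 < u := Real.rpow_pos_of_pos hk0 _
  have htu : 1 ≤ t * u := tu_ge_one hkpos hα0 hPpos hPlb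
  have htP : t ^ α = Pn := t_pow_eq hPpos hα0.ne'
  rw [hPeq]
  calc variance (fun ω => ∑ x, ((Nat.descFactorial (N x ω) α : ℝ) / n ^ α)) μ / Pn ^ 2
      ≤ ((1 / n ^ (2 * α)) * ∑ r ∈ Finset.range α,
          n ^ (α + r) * (Nat.choose α r : ℝ) * (α : ℝ) ^ (α - r) *
            (∑ x, p x ^ ((α : ℝ) + r))) / Pn ^ 2 :=
        div_le_div_of_nonneg_right part1 (by positivity)
    _ = ∑ r ∈ Finset.range α,
          n ^ (α + r) * (Nat.choose α r : ℝ) * (α : ℝ) ^ (α - r) *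
            (∑ x, p x ^ ((α : ℝ) + r)) / (n ^ (2 * α) * Pn ^ 2) := by
        rw [one_div, inv_mul_eq_div, div_div, Finset.sum_div]
    _ ≤ ∑ r ∈ Finset.range α,
          ((α : ℝ) ^ 2 * (k : ℝ) ^ (((α : ℝ) - 1) / α) / n) ^ (α - r) := by
        refine Finset.sum_le_sum fun r hr => ?_
        have hrα : r < α := Finset.mem_range.mp hr
        have hQeq : (∑ x, p x ^ ((α : ℝ) + r)) = ∑ x, p x ^ (α + r) := by
          refine Finset.sum_congr rfl fun x _ => ?_
          have h1 : ((α : ℝ) + r) = ((α + r : ℕ) : ℝ) := by push_cast; ring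
          rw [h1, Real.rpow_natCast]
        have hQ0 : 0 ≤ ∑ x, p x ^ (α + r) :=
          Finset.sum_nonneg fun x _ => pow_nonneg (hp0 x) _
        have hQ : (∑ x, p x ^ (α + r)) ≤ t ^ r * Pn :=
          sum_pow_bound p hp0 α r hα0 hPpos
        have hcb : (α.choose r : ℝ) ≤ (α : ℝ) ^ (α - r) := by
          have := choose_le_pow_sub α r hrα.le
          exact_mod_cast this
        rw [hQeq]
        exact term_bound α r hrα n (α.choose r) Pn (∑ x, p x ^ (α + r)) t u
          hn htpos hupos htP hQ0 hQ htu (by positivity) hcb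
end

section
/- For every positive integer d and every real number α with α ∉ {1, 2, …, d−1}, the alternating binomial sum Σ_{i=1}^{d} C(d, i) (−1)^{d−i} i^α is nonzero. (This sum vanishes exactly at α = 1, 2, …, d−1: a linear combination of the d exponentials α ↦ i^α, i = 1, …, d, can have at most d−1 real zeros.) -/
open Real

open Finset fwdDiff in
lemma fwdDiff_iter_pow_eq_zero : ∀ (m d : ℕ), m < d →
    (fwdDiff 1)^[d] (fun x : ℕ => (x : ℝ) ^ m) = 0 := by
  intro m
  induction m using Nat.strong_induction_on with
  | _ m IH =>
    intro d hmd
    obtain ⟨e, rfl⟩ : ∃ e, d = e + 1 := ⟨d - 1, by omega⟩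
    rw [Function.iterate_succ_apply]
    have hΔ : fwdDiff 1 (fun x : ℕ => (x : ℝ) ^ m)
        = ∑ j ∈ Finset.range m, (m.choose j : ℝ) • (fun x : ℕ => (x : ℝ) ^ j) := by
      funext x
      have hbin : ((x : ℝ) + 1) ^ m = ∑ j ∈ Finset.range (m + 1),
          (x : ℝ) ^ j * 1 ^ (m - j) * (m.choose j) := add_pow (x : ℝ) 1 m
      simp only [one_pow, mul_one, Finset.sum_range_succ, Nat.choose_self, Nat.cast_one] at hbin
      simp only [fwdDiff, Finset.sum_apply, Pi.smul_apply, smul_eq_mul]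
      push_cast
      rw [hbin, add_sub_cancel_right]
      exact Finset.sum_congr rfl (fun j _ => by ring)
    rw [hΔ, fwdDiff_iter_finset_sum]
    refine Finset.sum_eq_zero fun j hj => ?_
    rw [fwdDiff_iter_const_smul,
      IH j (Finset.mem_range.mp hj) e (by have := Finset.mem_range.mp hj; omega), smul_zero]

lemma alternating_sum_vanish (d m : ℕ) (hm1 : 1 ≤ m) (hmd : m < d) :
    ∑ i ∈ Finset.Icc 1 d, (Nat.choose d i : ℝ) * (-1) ^ (d - i) * (i : ℝ) ^ m = 0 := by
  have key := fwdDiff_iter_eq_sum_shift (1 : ℕ) (fun x : ℕ => (x : ℝ) ^ m) d 0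
  rw [fwdDiff_iter_pow_eq_zero m d hmd, Pi.zero_apply] at key
  have h0 : ∑ k ∈ Finset.range (d + 1),
      (Nat.choose d k : ℝ) * (-1) ^ (d - k) * (k : ℝ) ^ m = 0 := by
    rw [key]
    refine Finset.sum_congr rfl fun k _ => ?_
    simp only [zero_add, smul_eq_mul, mul_one, zsmul_eq_mul]
    push_cast
    ring
  rw [← h0]
  refine Finset.sum_subset ?_ ?_
  · intro k hk
    simp only [Finset.mem_Icc] at hk
    exact Finset.mem_range.mpr (by omega)
  · intro k hk hk'
    simp only [Finset.mem_range, Finset.mem_Icc] at hk hk'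
    have : k = 0 := by omega
    subst this
    simp [zero_pow (by omega : m ≠ 0)]

/-- A linear combination of `n+1` distinct exponentials with nonzero coefficients cannot
vanish at `n+1` distinct points. -/
lemma exp_sum_ne_zero : ∀ (n : ℕ) (s : Finset ℕ) (b a : ℕ → ℝ),
    s.card = n + 1 → Set.InjOn b ↑s → (∀ i ∈ s, a i ≠ 0) →
    ∀ T : Finset ℝ, T.card = n + 1 →
    ∃ t ∈ T, ∑ i ∈ s, a i * Real.exp (b i * t) ≠ 0 := by
  intro n
  induction n with
  | zero =>
    intro s b a hs hinj ha T hT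
    obtain ⟨i₀, rfl⟩ := Finset.card_eq_one.mp hs
    obtain ⟨t, rfl⟩ := Finset.card_eq_one.mp hT
    refine ⟨t, Finset.mem_singleton_self t, ?_⟩
    simp only [Finset.sum_singleton]
    exact mul_ne_zero (ha i₀ (Finset.mem_singleton_self i₀)) (Real.exp_ne_zero _)
  | succ n IH =>
    intro s b a hs hinj ha T hT
    by_contra hcon
    push_neg at hcon
    obtain ⟨i₀, hi₀⟩ : ∃ i₀, i₀ ∈ s := Finset.card_pos.mp (by rw [hs]; omega)
    set g : ℝ → ℝ := fun x => ∑ i ∈ s, a i * Real.exp ((b i - b i₀) * x) with hgdef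
    set D : ℝ → ℝ :=
      fun x => ∑ i ∈ s.erase i₀, a i * (b i - b i₀) * Real.exp ((b i - b i₀) * x) with hDdef
    have hgzero : ∀ t ∈ T, g t = 0 := by
      intro t ht
      have hgt : g t = (∑ i ∈ s, a i * Real.exp (b i * t)) * Real.exp (-(b i₀ * t)) := by
        rw [hgdef, Finset.sum_mul]
        refine Finset.sum_congr rfl fun i _ => ?_
        rw [mul_assoc, ← Real.exp_add]
        ring_nf
      rw [hgt, hcon t ht, zero_mul]
    have hderiv : ∀ x : ℝ, HasDerivAt g (D x) x := by
      intro x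
      have h1 : HasDerivAt g
          (∑ i ∈ s, a i * (Real.exp ((b i - b i₀) * x) * ((b i - b i₀) * 1))) x :=
        HasDerivAt.fun_sum fun i _ =>
          (((hasDerivAt_id x).const_mul (b i - b i₀)).exp).const_mul (a i)
      have hDx : D x = ∑ i ∈ s, a i * (Real.exp ((b i - b i₀) * x) * ((b i - b i₀) * 1)) := by
        rw [← Finset.sum_erase_add _ _ hi₀, sub_self, hDdef]
        simp only [zero_mul, mul_zero, mul_one, add_zero]
        refine Finset.sum_congr rfl fun i _ => by ring
      exact hDx ▸ h1
    set e : Fin (n + 2) → ℝ := fun i => T.orderEmbOfFin hT i with hedef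
    have he_mem : ∀ i, e i ∈ T := fun i => T.orderEmbOfFin_mem hT i
    have he_mono : StrictMono e := (T.orderEmbOfFin hT).strictMono
    have hroot : ∀ i : Fin (n + 1), ∃ c ∈ Set.Ioo (e i.castSucc) (e i.succ), D c = 0 := by
      intro i
      refine exists_hasDerivAt_eq_zero (he_mono (Fin.castSucc_lt_succ : i.castSucc < i.succ))
        (continuousOn_of_forall_continuousAt fun x _ => (hderiv x).continuousAt) ?_ fun x _ => hderiv x
      rw [hgzero _ (he_mem _), hgzero _ (he_mem _)]
    choose r hr hr0 using hroot
    have hrmono : StrictMono r := by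
      intro i j hij
      have h1 : r i < e i.succ := (hr i).2
      have h2 : e j.castSucc < r j := (hr j).1
      have h3 : e i.succ ≤ e j.castSucc := by
        refine he_mono.monotone ?_
        simp only [Fin.le_def, Fin.val_succ, Fin.coe_castSucc]
        have := (Fin.lt_def).mp hij
        omega
      linarith
    set T' : Finset ℝ := Finset.image r Finset.univ with hT'def
    have hT' : T'.card = n + 1 := by
      rw [hT'def, Finset.card_image_of_injective _ hrmono.injective, Finset.card_univ,
        Fintype.card_fin]
    have hs' : (s.erase i₀).card = n + 1 := by
      rw [Finset.card_erase_of_mem hi₀, hs]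
      omega
    have hinj' : Set.InjOn (fun i => b i - b i₀) ↑(s.erase i₀) := by
      intro x hx y hy hxy
      simp only [Finset.coe_erase, Set.mem_diff, Finset.mem_coe] at hx hy
      exact hinj hx.1 hy.1 (by linarith [sub_left_inj.mp hxy])
    have ha' : ∀ i ∈ s.erase i₀, a i * (b i - b i₀) ≠ 0 := by
      intro i hi
      obtain ⟨hne, hmem⟩ := Finset.mem_erase.mp hi
      exact mul_ne_zero (ha i hmem)
        (sub_ne_zero.mpr fun h => hne (hinj hmem hi₀ h))
    obtain ⟨t, htT', hne⟩ :=
      IH (s.erase i₀) (fun i => b i - b i₀) (fun i => a i * (b i - b i₀)) hs' hinj' ha' T' hT'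
    obtain ⟨i, -, rfl⟩ := Finset.mem_image.mp htT'
    exact hne (hr0 i)

/-- The alternating binomial sum `∑_{i=1}^d C(d,i) (-1)^(d-i) i^α` is nonzero for every real
`α ∉ {1, 2, …, d-1}`: a linear combination of the `d` exponentials `α ↦ i^α`, `i = 1, …, d`,
can have at most `d - 1` real zeros, and this one vanishes exactly at `α = 1, …, d-1`. -/
theorem alternating_binomial_sum_ne_zero (d : ℕ) (hd : 0 < d)
    (α : ℝ) (hα : ∀ m : ℕ, 1 ≤ m → m ≤ d - 1 → α ≠ m) :
    ∑ i ∈ Finset.Icc 1 d, (Nat.choose d i : ℝ) * (-1) ^ (d - i) * (i : ℝ) ^ α ≠ 0 := by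
  intro h0
  have hαnot : α ∉ (Finset.Icc 1 (d - 1)).image (fun m : ℕ => (m : ℝ)) := by
    intro hmem
    obtain ⟨m, hm, heq⟩ := Finset.mem_image.mp hmem
    obtain ⟨hm1, hm2⟩ := Finset.mem_Icc.mp hm
    exact hα m hm1 hm2 heq.symm
  set T : Finset ℝ := insert α ((Finset.Icc 1 (d - 1)).image (fun m : ℕ => (m : ℝ))) with hTdef
  have hTcard : T.card = (d - 1) + 1 := by
    rw [hTdef, Finset.card_insert_of_notMem hαnot,
      Finset.card_image_of_injective _ Nat.cast_injective, Nat.card_Icc]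
    omega
  have hscard : (Finset.Icc 1 d).card = (d - 1) + 1 := by
    rw [Nat.card_Icc]; omega
  have hinj : Set.InjOn (fun i : ℕ => Real.log i) ↑(Finset.Icc 1 d) := by
    intro x hx y hy h
    simp only [Finset.coe_Icc, Set.mem_Icc] at hx hy
    have hx0 : (0 : ℝ) < x := by exact_mod_cast hx.1
    have hy0 : (0 : ℝ) < y := by exact_mod_cast hy.1
    have : (x : ℝ) = y := by
      rw [← Real.exp_log hx0, ← Real.exp_log hy0]
      exact congrArg Real.exp h
    exact_mod_cast this
  have hanz : ∀ i ∈ Finset.Icc 1 d, (Nat.choose d i : ℝ) * (-1) ^ (d - i) ≠ 0 := by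
    intro i hi
    obtain ⟨hi1, hi2⟩ := Finset.mem_Icc.mp hi
    exact mul_ne_zero (Nat.cast_ne_zero.mpr (Nat.choose_pos hi2).ne')
      (pow_ne_zero _ (by norm_num))
  obtain ⟨t, htT, hne⟩ := exp_sum_ne_zero (d - 1) (Finset.Icc 1 d)
    (fun i : ℕ => Real.log i) (fun i : ℕ => (Nat.choose d i : ℝ) * (-1) ^ (d - i))
    hscard hinj hanz T hTcard
  apply hne
  have hsum : ∀ u : ℝ, ∑ i ∈ Finset.Icc 1 d,
      ((Nat.choose d i : ℝ) * (-1) ^ (d - i)) * Real.exp (Real.log i * u)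
      = ∑ i ∈ Finset.Icc 1 d, (Nat.choose d i : ℝ) * (-1) ^ (d - i) * (i : ℝ) ^ u := by
    intro u
    refine Finset.sum_congr rfl fun i hi => ?_
    obtain ⟨hi1, _⟩ := Finset.mem_Icc.mp hi
    rw [Real.rpow_def_of_pos (by exact_mod_cast hi1 : (0 : ℝ) < i)]
  rcases Finset.mem_insert.mp htT with rfl | hmem
  · rw [hsum]; exact h0
  · obtain ⟨m, hm, rfl⟩ := Finset.mem_image.mp hmem
    obtain ⟨hm1, hm2⟩ := Finset.mem_Icc.mp hm
    rw [hsum]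
    have : ∀ i : ℕ, (i : ℝ) ^ ((m : ℕ) : ℝ) = (i : ℝ) ^ (m : ℕ) := fun i => Real.rpow_natCast _ m
    simp only [this]
    exact alternating_sum_vanish d m hm1 (by omega)
end

section
/- For every integer α > 1 and every 0 < ε < 1/2, there exist constants c > 0 and δ_0 > 0 (depending on α and ε) such that for every 0 < δ < δ_0 and all sufficiently large k the following holds: if n ≤ c · k^{(α−1)/α} / δ², then for every estimator f : X^n → ℝ there exists a probability distribution p over an alphabet X of k elements with P_{X^n ~ p^{⊗n}}( |H_α(p) − f(X_1, …, X_n)| > δ ) ≥ ε. In other words, S_α(k, δ, ε) = Ω( k^{(α−1)/α} / δ² ). -/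
open Real

/-- The Rényi entropy of order `α ≠ 1`. -/
noncomputable def renyiEntropy {X : Type*} [Fintype X] (α : ℝ) (p : X → ℝ) : ℝ :=
  (1 / (1 - α)) * Real.log (∑ x, p x ^ α)

open Classical in
/-- The probability, under `n` i.i.d. samples from `p`, of the event `E` on sample sequences. -/
noncomputable def probEvent {X : Type*} [Fintype X] {n : ℕ} (p : X → ℝ)
    (E : (Fin n → X) → Prop) : ℝ :=
  ∑ s : Fin n → X, if E s then ∏ i, p (s i) else 0

private lemma sum_prod_eq_pow {X : Type*} [Fintype X] (g : X → ℝ) :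
    ∀ n : ℕ, ∑ s : Fin n → X, ∏ i, g (s i) = (∑ x, g x) ^ n := by
  intro n
  induction n with
  | zero => simp
  | succ n ih =>
    rw [← Equiv.sum_comp (Fin.consEquiv (fun _ : Fin (n+1) => X)) (fun s => ∏ i, g (s i))]
    rw [Fintype.sum_prod_type]
    simp only [Fin.consEquiv_apply, Fin.prod_univ_succ,
      Fin.cons_zero, Fin.cons_succ]
    simp_rw [← Finset.mul_sum, ih]
    rw [← Finset.sum_mul, pow_succ, mul_comm ((∑ x, g x) ^ n)]

private lemma sum_ite_fin {m : ℕ} (a c : ℝ) :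
    ∑ x : Fin (m + 2), (if x = 0 then a else c) = a + (m + 1) * c := by
  have h : ∀ x : Fin (m+2), (if x = 0 then a else c) = c + (if x = 0 then a - c else 0) := by
    intro x; split <;> ring
  simp_rw [h]
  rw [Finset.sum_add_distrib, Finset.sum_const,
    Finset.sum_ite_eq' Finset.univ (0 : Fin (m+2)) (fun _ => a - c)]
  simp [Finset.card_univ]
  ring

private lemma sqrt_prod' {ι : Type*} (s : Finset ι) (f : ι → ℝ) (h : ∀ i, 0 ≤ f i) :
    Real.sqrt (∏ i ∈ s, f i) = ∏ i ∈ s, Real.sqrt (f i) := by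
  induction s using Finset.cons_induction with
  | empty => simp
  | cons a s ha ih => rw [Finset.prod_cons, Finset.prod_cons, Real.sqrt_mul (h a), ih]

private lemma pow_sub_pow_le_mul (x y : ℝ) (hy : 0 ≤ y) (hyx : y ≤ x) (hx1 : x ≤ 1) :
    ∀ m : ℕ, x ^ m - y ^ m ≤ m * (x - y) := by
  intro m
  induction m with
  | zero => simp
  | succ m ih =>
    have hxm : y ^ m ≤ 1 := pow_le_one₀ hy (le_trans hyx hx1)
    have hd : 0 ≤ x ^ m - y ^ m := sub_nonneg.2 (pow_le_pow_left₀ hy hyx m)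
    have hx0 : 0 ≤ x := le_trans hy hyx
    have h : x ^ (m+1) - y ^ (m+1) = x * (x ^ m - y ^ m) + (x - y) * y ^ m := by ring
    rw [h]
    push_cast
    nlinarith [mul_le_of_le_one_left hd hx1, mul_le_of_le_one_right (sub_nonneg.2 hyx) hxm]

private lemma half_le_log_one_add (x : ℝ) (h0 : 0 ≤ x) (h1 : x ≤ 1) :
    x / 2 ≤ Real.log (1 + x) := by
  have hx : (0:ℝ) < 1 + x := by linarith
  have h := Real.log_le_sub_one_of_pos (show (0:ℝ) < (1+x)⁻¹ by positivity)
  rw [Real.log_inv] at h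
  have h2 : 1 - (1+x)⁻¹ ≤ Real.log (1+x) := by linarith
  have h3 : x / 2 ≤ 1 - (1+x)⁻¹ := by
    have hinv : (1+x)⁻¹ ≤ 1 - x/2 := by
      rw [inv_eq_one_div, div_le_iff₀ hx]
      nlinarith
    linarith
  linarith

private lemma tv_bound {X : Type*} [Fintype X] (W V : X → ℝ)
    (hW : ∀ x, 0 ≤ W x) (hV : ∀ x, 0 ≤ V x)
    (hW1 : ∑ x, W x = 1) (hV1 : ∑ x, V x = 1) :
    ∑ x, |W x - V x| ≤ 2 * Real.sqrt (2 * (1 - ∑ x, Real.sqrt (W x * V x))) := by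
  set B := ∑ x, Real.sqrt (W x * V x) with hB
  have hterm : ∀ x : X, Real.sqrt (W x * V x) = Real.sqrt (W x) * Real.sqrt (V x) :=
    fun x => Real.sqrt_mul (hW x) _
  have hB0 : 0 ≤ B := Finset.sum_nonneg fun x _ => Real.sqrt_nonneg _
  have hB1 : B ≤ 1 := by
    have h : ∀ x ∈ Finset.univ, Real.sqrt (W x * V x) ≤ (W x + V x)/2 := by
      intro x _
      rw [hterm x]
      nlinarith [Real.sq_sqrt (hW x), Real.sq_sqrt (hV x),
        sq_nonneg (Real.sqrt (W x) - Real.sqrt (V x))]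
    calc B ≤ ∑ x, (W x + V x)/2 := Finset.sum_le_sum h
      _ = 1 := by rw [← Finset.sum_div, Finset.sum_add_distrib, hW1, hV1]; norm_num
  have habs : ∀ x : X, |W x - V x|
      = |Real.sqrt (W x) - Real.sqrt (V x)| * (Real.sqrt (W x) + Real.sqrt (V x)) := by
    intro x
    have h1 : W x - V x
        = (Real.sqrt (W x) - Real.sqrt (V x)) * (Real.sqrt (W x) + Real.sqrt (V x)) := by
      have e1 := Real.sq_sqrt (hW x); have e2 := Real.sq_sqrt (hV x); nlinarith
    rw [h1, abs_mul,
      abs_of_nonneg (add_nonneg (Real.sqrt_nonneg (W x)) (Real.sqrt_nonneg (V x)))]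
  have hCS := Finset.sum_mul_sq_le_sq_mul_sq Finset.univ
    (fun x => |Real.sqrt (W x) - Real.sqrt (V x)|) (fun x => Real.sqrt (W x) + Real.sqrt (V x))
  have key1 : ∀ x : X, |Real.sqrt (W x) - Real.sqrt (V x)| ^ 2
      = W x + V x - 2 * Real.sqrt (W x * V x) := by
    intro x
    rw [sq_abs]
    have e1 := Real.sq_sqrt (hW x); have e2 := Real.sq_sqrt (hV x); have e3 := hterm x
    linear_combination e1 + e2 + 2 * e3
  have key2 : ∀ x : X, (Real.sqrt (W x) + Real.sqrt (V x)) ^ 2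
      = W x + V x + 2 * Real.sqrt (W x * V x) := by
    intro x
    have e1 := Real.sq_sqrt (hW x); have e2 := Real.sq_sqrt (hV x); have e3 := hterm x
    linear_combination e1 + e2 - 2 * e3
  have hsq1 : ∑ x, |Real.sqrt (W x) - Real.sqrt (V x)| ^ 2 = 2 - 2*B := by
    simp_rw [key1]
    rw [Finset.sum_sub_distrib, Finset.sum_add_distrib, hW1, hV1, ← Finset.mul_sum, ← hB]
    ring
  have hsq2 : ∑ x, (Real.sqrt (W x) + Real.sqrt (V x)) ^ 2 = 2 + 2*B := by
    simp_rw [key2]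
    rw [Finset.sum_add_distrib, Finset.sum_add_distrib, hW1, hV1, ← Finset.mul_sum, ← hB]
    ring
  rw [hsq1, hsq2] at hCS
  have hnn : 0 ≤ ∑ x, |W x - V x| := Finset.sum_nonneg fun x _ => abs_nonneg _
  have h4 : (∑ x, |W x - V x|) ^ 2 ≤ 2^2 * (2 * (1 - B)) := by
    simp_rw [habs]
    nlinarith [hCS]
  calc ∑ x, |W x - V x| = Real.sqrt ((∑ x, |W x - V x|)^2) := (Real.sqrt_sq hnn).symm
    _ ≤ Real.sqrt (2^2 * (2 * (1 - B))) := Real.sqrt_le_sqrt h4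
    _ = 2 * Real.sqrt (2 * (1 - B)) := by
        rw [Real.sqrt_mul (by positivity) _, Real.sqrt_sq (by norm_num : (0:ℝ) ≤ 2)]

private lemma probEvent_compl {X : Type*} [Fintype X] {n : ℕ} (p : X → ℝ)
    (h1 : ∑ x, p x = 1) (E : (Fin n → X) → Prop) :
    probEvent p E + probEvent p (fun s => ¬ E s) = 1 := by
  classical
  have h2 : probEvent p E + probEvent p (fun s => ¬ E s)
      = ∑ s : Fin n → X, ∏ i, p (s i) := by
    unfold probEvent
    rw [← Finset.sum_add_distrib]
    apply Finset.sum_congr rfl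
    intro s _
    by_cases hs : E s <;> simp [hs]
  rw [h2, sum_prod_eq_pow, h1, one_pow]

private lemma probEvent_mono {X : Type*} [Fintype X] {n : ℕ} (p : X → ℝ)
    (hp : ∀ x, 0 ≤ p x) {E F : (Fin n → X) → Prop} (h : ∀ s, E s → F s) :
    probEvent p E ≤ probEvent p F := by
  classical
  unfold probEvent
  apply Finset.sum_le_sum
  intro s _
  by_cases hs : E s
  · simp only [if_pos hs, if_pos (h s hs)]; exact le_refl _
  · simp only [if_neg hs]
    split
    · exact Finset.prod_nonneg fun i _ => hp _
    · exact le_refl _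

private lemma probEvent_ge_sub {X : Type*} [Fintype X] {n : ℕ} (p q : X → ℝ)
    (E : (Fin n → X) → Prop) :
    probEvent p E - (∑ s : Fin n → X, |(∏ i, p (s i)) - ∏ i, q (s i)|)
      ≤ probEvent q E := by
  classical
  unfold probEvent
  rw [sub_le_iff_le_add, ← Finset.sum_add_distrib]
  apply Finset.sum_le_sum
  intro s _
  by_cases hs : E s
  · simp only [if_pos hs]
    nlinarith [le_abs_self ((∏ i, p (s i)) - ∏ i, q (s i))]
  · simp only [if_neg hs]
    nlinarith [abs_nonneg ((∏ i, p (s i)) - ∏ i, q (s i))]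

private lemma sqrt_one_add_ge (θ : ℝ) (h0 : 0 ≤ θ) (h1 : θ ≤ 1) :
    1 + θ/2 - θ^2/8 ≤ Real.sqrt (1 + θ) := by
  have hx : 0 ≤ 1 + θ/2 - θ^2/8 := by nlinarith
  have h4 : θ^4 ≤ θ^3 := by nlinarith [pow_nonneg h0 3]
  have h2 : (1 + θ/2 - θ^2/8)^2 ≤ 1 + θ := by nlinarith [h4]
  calc 1 + θ/2 - θ^2/8 = Real.sqrt ((1 + θ/2 - θ^2/8)^2) := (Real.sqrt_sq hx).symm
    _ ≤ Real.sqrt (1 + θ) := Real.sqrt_le_sqrt h2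

private lemma sqrt_tail_ge (μ θ : ℝ) (hμ0 : 0 ≤ μ) (hμ3 : μ ≤ 1/3)
    (h0 : 0 ≤ θ) (h1 : θ ≤ 1) :
    1 - μ - μ*θ/2 - μ*θ^2 ≤ Real.sqrt ((1 - μ) * (1 - μ*(1+θ))) := by
  have hx : 0 ≤ 1 - μ - μ*θ/2 - μ*θ^2 := by nlinarith
  have hid : (1-μ)*(1-μ*(1+θ)) - (1 - μ - μ*θ/2 - μ*θ^2)^2
      = μ*θ^2*(2*(1-μ) - μ*(1/2+θ)^2) := by ring
  have h2 : (1 - μ - μ*θ/2 - μ*θ^2)^2 ≤ (1 - μ) * (1 - μ*(1+θ)) := by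
    nlinarith [mul_nonneg hμ0 (sq_nonneg θ), sq_nonneg (1/2+θ),
      mul_nonneg (mul_nonneg hμ0 (sq_nonneg θ)) (mul_nonneg hμ0 h0)]
  calc 1 - μ - μ*θ/2 - μ*θ^2 = Real.sqrt ((1 - μ - μ*θ/2 - μ*θ^2)^2) := (Real.sqrt_sq hx).symm
    _ ≤ Real.sqrt ((1 - μ) * (1 - μ*(1+θ))) := Real.sqrt_le_sqrt h2

set_option maxHeartbeats 1000000 in
/-- **Lower bound for integral `α > 1`.**  For every integer `α > 1` and `0 < ε < 1/2`
there are constants `c > 0` and `δ₀ > 0` (depending on `α`, `ε`) such that for every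
`0 < δ < δ₀` and all sufficiently large `k`: any estimator using `n ≤ c k^{(α-1)/α}/δ²`
samples fails, on some distribution over `k` symbols, to estimate the order-`α` Rényi
entropy to within `δ` with probability at least `ε`:
`S_α(k, δ, ε) = Ω(k^{(α-1)/α}/δ²)`. -/
theorem renyi_lower_bound_integral (α : ℕ) (hα : 1 < α)
    (ε : ℝ) (hε0 : 0 < ε) (hε1 : ε < 1 / 2) :
    ∃ c > (0 : ℝ), ∃ δ₀ > (0 : ℝ), ∀ δ : ℝ, 0 < δ → δ < δ₀ → ∃ K : ℕ, ∀ k : ℕ, K ≤ k →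
      ∀ n : ℕ, (n : ℝ) ≤ c * (k : ℝ) ^ (((α : ℝ) - 1) / α) / δ ^ 2 →
        ∀ f : (Fin n → Fin k) → ℝ,
          ∃ p : Fin k → ℝ, IsDist p ∧
            ε ≤ probEvent p (fun s => δ < |renyiEntropy α p - f s|) := by
  classical
  obtain ⟨b, rfl⟩ : ∃ b, α = b + 1 := ⟨α - 1, by omega⟩
  have hb : 1 ≤ b := by omega
  have h2ε : 0 < 1 - 2*ε := by linarith
  have hbR1 : (1:ℝ) ≤ (b:ℝ) := by exact_mod_cast hb
  have hbRpos : (0:ℝ) < (b:ℝ) := by linarith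
  set C1 : ℝ := 1 + 2 ^ b with hC1def
  have h2b : (1:ℝ) ≤ 2 ^ b := one_le_pow₀ (by norm_num)
  have hC1pos : 0 < C1 := by rw [hC1def]; positivity
  have hC1ge1 : 1 ≤ C1 := by rw [hC1def]; nlinarith
  refine ⟨(1 - 2*ε)^2 / (400 * C1^2 * (b:ℝ)^2), div_pos (pow_pos h2ε 2) (by positivity),
    1/(5*C1*(b:ℝ)), by positivity, ?_⟩
  intro δ hδ0 hδδ0
  set θ : ℝ := 5*C1*(b:ℝ)*δ with hθdef
  have hθpos : 0 < θ := by rw [hθdef]; positivity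
  have hθ1 : θ ≤ 1 := by
    have h := mul_lt_mul_of_pos_left hδδ0 (show (0:ℝ) < 5*C1*(b:ℝ) by positivity)
    rw [mul_one_div, div_self (show (5*C1*(b:ℝ)) ≠ 0 by positivity)] at h
    rw [hθdef]; linarith
  refine ⟨(2*(b+1))^(b+1) + 9, ?_⟩
  intro k hK n hn f
  have hk9 : 9 ≤ k := le_trans (Nat.le_add_left 9 _) hK
  obtain ⟨m, rfl⟩ : ∃ m, k = m + 2 := ⟨k - 2, by omega⟩
  have hmnn : (0:ℝ) ≤ (m:ℝ) := Nat.cast_nonneg m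
  have hM1pos : (0:ℝ) < (m:ℝ) + 1 := by linarith
  have hkRpos : (0:ℝ) < (m:ℝ) + 2 := by linarith
  have hkR1 : (1:ℝ) ≤ (m:ℝ) + 2 := by linarith
  have hKk : ((2*(b+1):ℕ):ℝ)^(b+1) ≤ (m:ℝ) + 2 := by
    have h9 : (2*(b+1))^(b+1) ≤ m + 2 := le_trans (Nat.le_add_right _ 9) hK
    calc ((2*(b+1):ℕ):ℝ)^(b+1) = (((2*(b+1))^(b+1) : ℕ) : ℝ) := by push_cast; ring
      _ ≤ ((m+2:ℕ):ℝ) := by exact_mod_cast h9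
      _ = (m:ℝ) + 2 := by push_cast; ring
  set e : ℝ := (b:ℝ)/((b:ℝ)+1) with hedef
  have hbR1pos : (0:ℝ) < (b:ℝ) + 1 := by linarith
  set R : ℝ := ((m:ℝ) + 2) ^ e with hRdef
  have hRpos : 0 < R := Real.rpow_pos_of_pos hkRpos e
  set μ : ℝ := R⁻¹ with hμdef
  have hμpos : 0 < μ := by rw [hμdef]; positivity
  have hμeq : μ = ((m:ℝ) + 2) ^ (-e) := by rw [hμdef, hRdef, ← Real.rpow_neg hkRpos.le]
  -- `(m+2) * μ = (m+2)^(1/(b+1))`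
  have hprod : ((m:ℝ) + 2) * μ = ((m:ℝ) + 2) ^ (((b:ℝ)+1)⁻¹) := by
    rw [hμeq]
    rw [show ((m:ℝ)+2) * ((m:ℝ)+2) ^ (-e) = ((m:ℝ)+2) ^ (1:ℝ) * ((m:ℝ)+2) ^ (-e) by
      rw [Real.rpow_one]]
    rw [← Real.rpow_add hkRpos]
    congr 1
    rw [hedef]; field_simp; ring
  have hSge : 2*((b:ℝ)+1) ≤ ((m:ℝ) + 2) * μ := by
    rw [hprod]
    have hx : (0:ℝ) ≤ 2*((b:ℝ)+1) := by positivity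
    have hcast : ((b+1:ℕ):ℝ) = (b:ℝ) + 1 := by push_cast; ring
    have h1 : (2*((b:ℝ)+1)) ^ (b+1) ≤ (m:ℝ) + 2 := by
      calc (2*((b:ℝ)+1)) ^ (b+1) = ((2*(b+1):ℕ):ℝ) ^ (b+1) := by push_cast; ring
        _ ≤ (m:ℝ) + 2 := hKk
    have h2 := Real.rpow_le_rpow (by positivity) h1
      (show (0:ℝ) ≤ ((b:ℝ)+1)⁻¹ by positivity)
    rwa [← Real.rpow_natCast (2*((b:ℝ)+1)) (b+1), ← Real.rpow_mul hx, hcast,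
      mul_inv_cancel₀ (ne_of_gt hbR1pos), Real.rpow_one] at h2
  have hRge : ((m:ℝ) + 2) ^ (((b:ℝ)+1)⁻¹) ≤ R := by
    rw [hRdef]
    apply Real.rpow_le_rpow_of_exponent_le hkR1
    rw [hedef, inv_eq_one_div]
    gcongr
  have hμ14 : μ ≤ 1/4 := by
    have h4 : (4:ℝ) ≤ R := by
      calc (4:ℝ) ≤ 2*((b:ℝ)+1) := by linarith
        _ ≤ ((m:ℝ)+2) * μ := hSge
        _ = ((m:ℝ)+2) ^ (((b:ℝ)+1)⁻¹) := hprod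
        _ ≤ R := hRge
    rw [hμdef]
    have := inv_anti₀ (show (0:ℝ) < 4 by norm_num) h4
    linarith [this]
  have hμ13 : μ ≤ 1/3 := by linarith
  have h1μnn : (0:ℝ) ≤ 1 - μ := by linarith
  have hRpow : R ^ (b+1) = ((m:ℝ) + 2) ^ b := by
    rw [hRdef, ← Real.rpow_natCast (((m:ℝ) + 2) ^ e) (b+1), ← Real.rpow_mul hkRpos.le]
    have he1 : e * ((b+1:ℕ):ℝ) = (b:ℝ) := by rw [hedef]; push_cast; field_simp
    rw [he1, Real.rpow_natCast]
  have hT : μ^(b+1) = (((m:ℝ) + 2) ^ b)⁻¹ := by rw [hμdef, inv_pow, hRpow]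
  have hTpos : 0 < μ^(b+1) := pow_pos hμpos _
  set ν : ℝ := μ * (1+θ) with hνdef
  have hνμ : μ ≤ ν := le_mul_of_one_le_right hμpos.le (by linarith)
  have hνpos : 0 < ν := lt_of_lt_of_le hμpos hνμ
  have hν12 : ν ≤ 1/2 := by
    rw [hνdef]
    have hμθ : μ*θ ≤ (1/4)*1 := mul_le_mul hμ14 hθ1 hθpos.le (by norm_num)
    nlinarith [hμθ]
  have h1νnn : (0:ℝ) ≤ 1 - ν := by linarith
  set P : Fin (m+2) → ℝ := fun x => if x = 0 then μ else (1-μ)/((m:ℝ)+1) with hPdef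
  set Q : Fin (m+2) → ℝ := fun x => if x = 0 then ν else (1-ν)/((m:ℝ)+1) with hQdef
  have hPnn : ∀ x, 0 ≤ P x := by
    intro x; rw [hPdef]; dsimp only
    split
    · exact hμpos.le
    · exact div_nonneg h1μnn hM1pos.le
  have hQnn : ∀ x, 0 ≤ Q x := by
    intro x; rw [hQdef]; dsimp only
    split
    · exact hνpos.le
    · exact div_nonneg h1νnn hM1pos.le
  have hcanc : ∀ y : ℝ, ((m:ℝ)+1) * (y/((m:ℝ)+1)) = y := by
    intro y; field_simp
  have hPsum : ∑ x, P x = 1 := by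
    rw [hPdef, sum_ite_fin μ ((1-μ)/((m:ℝ)+1)), hcanc]
    ring
  have hQsum : ∑ x, Q x = 1 := by
    rw [hQdef, sum_ite_fin ν ((1-ν)/((m:ℝ)+1)), hcanc]
    ring
  set SP : ℝ := μ^(b+1) + (1-μ)^(b+1)/((m:ℝ)+1)^b with hSPdef
  set SQ : ℝ := ν^(b+1) + (1-ν)^(b+1)/((m:ℝ)+1)^b with hSQdef
  have hPS : ∑ x, P x ^ (b+1) = SP := by
    rw [hPdef]
    simp_rw [apply_ite (fun y : ℝ => y^(b+1))]
    rw [sum_ite_fin]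
    rw [hSPdef]
    congr 1
    rw [div_pow, pow_succ]
    field_simp
    ring
  have hQS : ∑ x, Q x ^ (b+1) = SQ := by
    rw [hQdef]
    simp_rw [apply_ite (fun y : ℝ => y^(b+1))]
    rw [sum_ite_fin]
    rw [hSQdef]
    congr 1
    rw [div_pow, pow_succ]
    field_simp
    ring
  have hSPpos : 0 < SP := by
    rw [hSPdef]
    exact add_pos_of_pos_of_nonneg hTpos
      (div_nonneg (pow_nonneg h1μnn _) (pow_nonneg hM1pos.le _))
  have hμM1 : (b:ℝ) + 1 ≤ μ * ((m:ℝ)+1) := by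
    have h1 : μ * ((m:ℝ)+1) = ((m:ℝ)+2)*μ - μ := by ring
    rw [h1]; linarith
  have hTM1 : ((b:ℝ)+1) * μ ≤ μ^(b+1) * ((m:ℝ)+1)^b := by
    have h1 : μ^(b+1) * ((m:ℝ)+1)^b = μ * (μ*((m:ℝ)+1))^b := by
      rw [mul_pow, pow_succ]; ring
    rw [h1]
    have h2 : (b:ℝ) + 1 ≤ (μ*((m:ℝ)+1))^b :=
      le_trans hμM1 (le_self_pow₀ (by linarith) (by omega))
    calc ((b:ℝ)+1)*μ = μ*((b:ℝ)+1) := mul_comm _ _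
      _ ≤ μ*(μ*((m:ℝ)+1))^b := mul_le_mul_of_nonneg_left h2 hμpos.le
  have htail : (1-μ)^(b+1) - (1-ν)^(b+1) ≤ ((b:ℝ)+1) * (μ*θ) := by
    have h := pow_sub_pow_le_mul (1-μ) (1-ν) h1νnn (by linarith) (by linarith) (b+1)
    have hδν : (1-μ) - (1-ν) = μ*θ := by rw [hνdef]; ring
    rw [hδν] at h
    calc (1-μ)^(b+1) - (1-ν)^(b+1) ≤ ((b+1:ℕ):ℝ) * (μ*θ) := h
      _ = ((b:ℝ)+1) * (μ*θ) := by push_cast; ring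
  have hhead : μ^(b+1) * (2*θ) ≤ ν^(b+1) - μ^(b+1) := by
    have hB := one_add_mul_le_pow (show (-2:ℝ) ≤ θ by linarith) (b+1)
    have hν' : ν^(b+1) = μ^(b+1) * (1+θ)^(b+1) := by rw [hνdef, mul_pow]
    have h12 : (1:ℝ) + 2*θ ≤ (1+θ)^(b+1) := by
      refine le_trans ?_ hB
      push_cast
      have hm := mul_le_mul_of_nonneg_right hbR1 hθpos.le
      linarith only [hm]
    have h13 : μ^(b+1)*(1+2*θ) ≤ μ^(b+1)*(1+θ)^(b+1) :=
      mul_le_mul_of_nonneg_left h12 hTpos.le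
    rw [← hν'] at h13
    linarith only [h13]
  have hgapS : SP + θ * μ^(b+1) ≤ SQ := by
    rw [hSPdef, hSQdef]
    have hdivtail : ((1-μ)^(b+1) - (1-ν)^(b+1))/((m:ℝ)+1)^b ≤ θ * μ^(b+1) := by
      rw [div_le_iff₀ (pow_pos hM1pos b)]
      calc (1-μ)^(b+1) - (1-ν)^(b+1) ≤ ((b:ℝ)+1)*(μ*θ) := htail
        _ = θ * (((b:ℝ)+1)*μ) := by ring
        _ ≤ θ * (μ^(b+1)*((m:ℝ)+1)^b) := mul_le_mul_of_nonneg_left hTM1 hθpos.le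
        _ = θ * μ^(b+1) * ((m:ℝ)+1)^b := by ring
    have hsplit : (1-μ)^(b+1)/((m:ℝ)+1)^b - (1-ν)^(b+1)/((m:ℝ)+1)^b
        = ((1-μ)^(b+1) - (1-ν)^(b+1))/((m:ℝ)+1)^b := (sub_div _ _ _).symm
    linarith only [hhead, hdivtail, hsplit]
  have hSPC1T : SP ≤ C1 * μ^(b+1) := by
    have h1 : (1-μ)^(b+1) ≤ 1 := pow_le_one₀ h1μnn (by linarith)
    have h2 : (1:ℝ)/((m:ℝ)+1)^b ≤ 2^b * μ^(b+1) := by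
      rw [div_le_iff₀ (pow_pos hM1pos b)]
      have h3 : ((m:ℝ)+2)^b ≤ (2*((m:ℝ)+1))^b := by
        apply pow_le_pow_left₀ hkRpos.le
        linarith
      calc (1:ℝ) = μ^(b+1) * ((m:ℝ)+2)^b := by
            rw [hT, inv_mul_cancel₀ (ne_of_gt (pow_pos hkRpos b))]
        _ ≤ μ^(b+1) * (2*((m:ℝ)+1))^b := mul_le_mul_of_nonneg_left h3 (pow_nonneg hμpos.le _)
        _ = 2^b * μ^(b+1) * ((m:ℝ)+1)^b := by rw [mul_pow]; ring
    have h4 : (1-μ)^(b+1)/((m:ℝ)+1)^b ≤ 1/((m:ℝ)+1)^b := by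
      gcongr
    rw [hSPdef, hC1def]
    have h5 := le_trans h4 h2
    linarith only [h5, hTpos]
  have hSQpos : 0 < SQ :=
    lt_of_lt_of_le (add_pos hSPpos (mul_pos hθpos hTpos)) hgapS
  have hratio : 1 + θ/C1 ≤ SQ/SP := by
    rw [le_div_iff₀ hSPpos]
    have hh : (θ/C1)*SP ≤ θ*μ^(b+1) := by
      calc (θ/C1)*SP ≤ (θ/C1)*(C1*μ^(b+1)) :=
            mul_le_mul_of_nonneg_left hSPC1T (le_of_lt (div_pos hθpos hC1pos))
        _ = θ*μ^(b+1) := by field_simp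
    calc (1 + θ/C1)*SP = SP + (θ/C1)*SP := by ring
      _ ≤ SP + θ*μ^(b+1) := by linarith only [hh]
      _ ≤ SQ := hgapS
  have hlog : θ/(2*C1) ≤ Real.log SQ - Real.log SP := by
    rw [← Real.log_div (ne_of_gt hSQpos) (ne_of_gt hSPpos)]
    have h1 : θ/C1 ≤ 1 := by rw [div_le_one hC1pos]; linarith
    have h2 := half_le_log_one_add (θ/C1) (le_of_lt (div_pos hθpos hC1pos)) h1
    have h3 : Real.log (1 + θ/C1) ≤ Real.log (SQ/SP) :=
      Real.log_le_log (by positivity) hratio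
    calc θ/(2*C1) = (θ/C1)/2 := by rw [div_div, mul_comm]
      _ ≤ Real.log (1+θ/C1) := h2
      _ ≤ _ := h3
  have hHgap : 2*δ < renyiEntropy ((b+1:ℕ):ℝ) P - renyiEntropy ((b+1:ℕ):ℝ) Q := by
    have hunfold : renyiEntropy ((b+1:ℕ):ℝ) P - renyiEntropy ((b+1:ℕ):ℝ) Q
        = (Real.log SQ - Real.log SP)/(b:ℝ) := by
      simp only [renyiEntropy]
      simp_rw [Real.rpow_natCast]
      rw [hPS, hQS]
      have hb1 : ((b+1:ℕ):ℝ) = (b:ℝ)+1 := by push_cast; ring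
      rw [hb1]
      have hrw : (1:ℝ)/(1-((b:ℝ)+1)) = -(1/(b:ℝ)) := by
        rw [show (1:ℝ)-((b:ℝ)+1) = -(b:ℝ) by ring, div_neg]
      rw [hrw]
      field_simp
      ring
    rw [hunfold]
    rw [hθdef] at hlog
    have heq : (5*C1*(b:ℝ)*δ)/(2*C1) = 5/2*((b:ℝ)*δ) := by
      field_simp
    rw [heq] at hlog
    rw [lt_div_iff₀ hbRpos]
    linarith only [hlog, mul_pos hδ0 hbRpos]
  have hWnn : ∀ s : Fin n → Fin (m+2), 0 ≤ ∏ i, P (s i) :=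
    fun s => Finset.prod_nonneg fun i _ => hPnn _
  have hVnn : ∀ s : Fin n → Fin (m+2), 0 ≤ ∏ i, Q (s i) :=
    fun s => Finset.prod_nonneg fun i _ => hQnn _
  have hWsum : ∑ s : Fin n → Fin (m+2), ∏ i, P (s i) = 1 := by
    rw [sum_prod_eq_pow, hPsum, one_pow]
  have hVsum : ∑ s : Fin n → Fin (m+2), ∏ i, Q (s i) = 1 := by
    rw [sum_prod_eq_pow, hQsum, one_pow]
  set B : ℝ := ∑ x, Real.sqrt (P x * Q x) with hBdef
  have hBn : ∑ s : Fin n → Fin (m+2), Real.sqrt ((∏ i, P (s i)) * ∏ i, Q (s i)) = B^n := by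
    have h1 : ∀ s : Fin n → Fin (m+2),
        Real.sqrt ((∏ i, P (s i)) * ∏ i, Q (s i)) = ∏ i, Real.sqrt (P (s i) * Q (s i)) := by
      intro s
      rw [← Finset.prod_mul_distrib]
      exact sqrt_prod' Finset.univ _ (fun i => mul_nonneg (hPnn _) (hQnn _))
    simp_rw [h1]
    rw [hBdef]
    exact sum_prod_eq_pow (fun x => Real.sqrt (P x * Q x)) n
  have hBval : B = μ * Real.sqrt (1+θ) + Real.sqrt ((1-μ)*(1-ν)) := by
    rw [hBdef]
    have hterm : ∀ x : Fin (m+2), Real.sqrt (P x * Q x)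
        = if x = 0 then μ * Real.sqrt (1+θ) else Real.sqrt ((1-μ)*(1-ν))/((m:ℝ)+1) := by
      intro x
      rw [hPdef, hQdef]
      dsimp only
      split
      · rw [hνdef, show μ*(μ*(1+θ)) = μ^2*(1+θ) by ring,
          Real.sqrt_mul (sq_nonneg μ), Real.sqrt_sq hμpos.le]
      · rw [div_mul_div_comm,
          show ((m:ℝ)+1)*((m:ℝ)+1) = ((m:ℝ)+1)^2 from (sq ((m:ℝ)+1)).symm]
        rw [Real.sqrt_div (mul_nonneg h1μnn h1νnn), Real.sqrt_sq hM1pos.le]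
    simp_rw [hterm]
    rw [sum_ite_fin, hcanc]
  have hBlb : 1 - 2*(μ*θ^2) ≤ B := by
    rw [hBval]
    have h1 := sqrt_one_add_ge θ hθpos.le hθ1
    have h2 := sqrt_tail_ge μ θ hμpos.le hμ13 hθpos.le hθ1
    rw [← hνdef] at h2
    have h3 : μ*(1 + θ/2 - θ^2/8) ≤ μ * Real.sqrt (1+θ) :=
      mul_le_mul_of_nonneg_left h1 hμpos.le
    linarith only [h3, h2, mul_nonneg hμpos.le (sq_nonneg θ)]
  push_cast at hn
  rw [show ((b:ℝ)+1-1)/((b:ℝ)+1) = e from by rw [hedef]; ring] at hn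
  have hkmul : ((m:ℝ)+2)^e * μ = 1 := by
    rw [hμeq, ← Real.rpow_add hkRpos, add_neg_cancel, Real.rpow_zero]
  have hnμ : (n:ℝ)*μ ≤ (1-2*ε)^2/(400*C1^2*(b:ℝ)^2)/δ^2 := by
    calc (n:ℝ)*μ ≤ ((1-2*ε)^2/(400*C1^2*(b:ℝ)^2) * ((m:ℝ)+2)^e / δ^2) * μ :=
          mul_le_mul_of_nonneg_right hn hμpos.le
      _ = (1-2*ε)^2/(400*C1^2*(b:ℝ)^2)/δ^2 * (((m:ℝ)+2)^e * μ) := by ring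
      _ = (1-2*ε)^2/(400*C1^2*(b:ℝ)^2)/δ^2 := by rw [hkmul, mul_one]
  have hnμθ : (n:ℝ)*(μ*θ^2) ≤ (1-2*ε)^2/16 := by
    have hθsq : θ^2 = 25*C1^2*(b:ℝ)^2*δ^2 := by rw [hθdef]; ring
    calc (n:ℝ)*(μ*θ^2) = ((n:ℝ)*μ)*θ^2 := by ring
      _ ≤ ((1-2*ε)^2/(400*C1^2*(b:ℝ)^2)/δ^2)*θ^2 :=
          mul_le_mul_of_nonneg_right hnμ (sq_nonneg θ)
      _ = (1-2*ε)^2/16 := by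
          rw [hθsq]
          field_simp
          ring
  have hB0 : 0 ≤ B := Finset.sum_nonneg fun x _ => Real.sqrt_nonneg _
  have hBern : 1 - B^n ≤ (n:ℝ)*(1-B) := by
    have h := one_add_mul_le_pow (show (-2:ℝ) ≤ B - 1 by linarith only [hB0]) n
    rw [show (1:ℝ)+(B-1) = B by ring] at h
    linarith only [h]
  have harg : 2*(1 - B^n) ≤ ((1-2*ε)/2)^2 := by
    have hq : (n:ℝ)*(1-B) ≤ (n:ℝ)*(2*(μ*θ^2)) :=
      mul_le_mul_of_nonneg_left (by linarith only [hBlb]) (Nat.cast_nonneg n)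
    have hsq : ((1-2*ε)/2)^2 = (1-2*ε)^2/4 := by ring
    linarith only [hBern, hnμθ, hq, hsq]
  have htv : (∑ s : Fin n → Fin (m+2), |(∏ i, P (s i)) - ∏ i, Q (s i)|) ≤ 1 - 2*ε := by
    have h0 := tv_bound (fun s : Fin n → Fin (m+2) => ∏ i, P (s i))
      (fun s => ∏ i, Q (s i)) hWnn hVnn hWsum hVsum
    rw [hBn] at h0
    calc (∑ s : Fin n → Fin (m+2), |(∏ i, P (s i)) - ∏ i, Q (s i)|)
        ≤ 2 * Real.sqrt (2*(1 - B^n)) := h0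
      _ ≤ 2 * Real.sqrt (((1-2*ε)/2)^2) :=
          mul_le_mul_of_nonneg_left (Real.sqrt_le_sqrt harg) (by norm_num)
      _ = 2*((1-2*ε)/2) := by rw [Real.sqrt_sq (by linarith only [h2ε])]
      _ = 1 - 2*ε := by ring
  by_cases hcase : ε ≤ probEvent P (fun s => δ < |renyiEntropy ((b+1:ℕ):ℝ) P - f s|)
  · exact ⟨P, ⟨hPnn, hPsum⟩, hcase⟩
  · push_neg at hcase
    refine ⟨Q, ⟨hQnn, hQsum⟩, ?_⟩
    have hcompl := probEvent_compl P hPsum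
      (fun s => δ < |renyiEntropy ((b+1:ℕ):ℝ) P - f s|)
    have hsub := probEvent_ge_sub P Q
      (fun s => ¬ (δ < |renyiEntropy ((b+1:ℕ):ℝ) P - f s|))
    have hmono : probEvent Q (fun s => ¬ (δ < |renyiEntropy ((b+1:ℕ):ℝ) P - f s|))
        ≤ probEvent Q (fun s => δ < |renyiEntropy ((b+1:ℕ):ℝ) Q - f s|) := by
      apply probEvent_mono Q hQnn
      intro s hs
      push_neg at hs
      have h1 := abs_le.mp hs
      have h2 : renyiEntropy ((b+1:ℕ):ℝ) Q - f s < -δ := by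
        linarith only [h1.2, hHgap]
      calc δ < -(renyiEntropy ((b+1:ℕ):ℝ) Q - f s) := by linarith only [h2]
        _ ≤ |renyiEntropy ((b+1:ℕ):ℝ) Q - f s| := neg_le_abs _
    linarith only [hcompl, hsub, hmono, htv, hcase]
end
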